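/- arXiv:1607.07583 — 3 statements merged into one kernel-verified Lean document; each statement's English description precedes it below -/
import Mathlib

section
/- For all integers N ≥ 1, all nonnegative integers Σ_1, Σ_2, and all positive integers n, a_{3N}(Σ_1, Σ_2; n) = Σ_{k ≥ 1} [ a_{3N−1}(Σ_1, Σ_2; n − 3Nk) + a_{3N−2}(Σ_1, Σ_2; n − 3Nk) ], where terms with n − 3Nk < 0 are zero. -/
/-- The `i`-th largest part (0-indexed) of the weakly decreasing list of parts of a
partition of `n` (entries beyond the number of parts are `0`, which realizes the
padding by zeros). -/
def nthPart {n : ℕ} (P : n.Partition) (i : ℕ) : ℕ :=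
  ((P.parts.sort (· ≤ ·)).reverse).getD i 0

/-- The `j`-th component (`1 ≤ j ≤ m - 1`) of the alternating sum type modulo `m` of a
partition of `n`: `Σ_j = ∑_i (λ_{(i-1)m+j} - λ_{(i-1)m+j+1})` (1-indexed parts, padded
by zeros; summing over `i < n + 1` covers every nonzero term). -/
def altSumType (m : ℕ) {n : ℕ} (P : n.Partition) (j : ℕ) : ℕ :=
  ∑ i ∈ Finset.range (n + 1), (nthPart P (i * m + (j - 1)) - nthPart P (i * m + j))

/-- `aN N s1 s2 n` : the number of partitions of `n` with exactly `N` (positive) parts,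
every part occurring at most twice, and alternating sum type modulo `3` equal to
`(s1, s2)`. -/
noncomputable def aN (N s1 s2 n : ℕ) : ℕ :=
  Nat.card {P : n.Partition // P.parts.card = N ∧ (∀ p, P.parts.count p ≤ 2) ∧
    altSumType 3 P 1 = s1 ∧ altSumType 3 P 2 = s2}

namespace Stmt9Aux

/-! ### The weakly decreasing list of parts -/

/-- The weakly decreasing list of parts. -/
def dl {n : ℕ} (P : n.Partition) : List ℕ := (P.parts.sort (· ≤ ·)).reverse

lemma nthPart_def {n : ℕ} (P : n.Partition) (i : ℕ) : nthPart P i = (dl P).getD i 0 := rfl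

lemma dl_coe {n : ℕ} (P : n.Partition) : ((dl P : List ℕ) : Multiset ℕ) = P.parts := by
  rw [dl, Multiset.coe_reverse, Multiset.sort_eq]

lemma dl_length {n : ℕ} (P : n.Partition) : (dl P).length = Multiset.card P.parts := by
  rw [dl, List.length_reverse, Multiset.length_sort]

lemma dl_sorted {n : ℕ} (P : n.Partition) : (dl P).Pairwise (fun a b => b ≤ a) := by
  rw [dl, List.pairwise_reverse]
  exact Multiset.pairwise_sort _ _

lemma dl_unique {n : ℕ} (P : n.Partition) (l : List ℕ) (hl : (l : Multiset ℕ) = P.parts)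
    (hs : l.Pairwise (fun a b => b ≤ a)) : dl P = l := by
  have h1 : l.reverse.Pairwise (· ≤ ·) := by
    rw [List.pairwise_reverse]; exact hs
  have h2 : P.parts.sort (· ≤ ·) = l.reverse := by
    refine List.Perm.eq_of_pairwise' (Multiset.pairwise_sort _ _) h1 ?_
    rw [← Multiset.coe_eq_coe, Multiset.sort_eq, Multiset.coe_reverse, hl]
  rw [dl, h2, List.reverse_reverse]

lemma nthPart_eq_zero {n : ℕ} (P : n.Partition) {i : ℕ} (h : Multiset.card P.parts ≤ i) :
    nthPart P i = 0 := by
  rw [nthPart_def]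
  exact List.getD_eq_default _ _ (by rw [dl_length]; exact h)

lemma card_le_sum {s : Multiset ℕ} (h : ∀ x ∈ s, 0 < x) : Multiset.card s ≤ s.sum := by
  induction s using Multiset.induction with
  | empty => simp
  | cons a s ih =>
    simp only [Multiset.card_cons, Multiset.sum_cons]
    have ha := h a (Multiset.mem_cons_self a s)
    have := ih (fun x hx => h x (Multiset.mem_cons_of_mem hx))
    omega

lemma card_le {n : ℕ} (P : n.Partition) : Multiset.card P.parts ≤ n := by
  have := P.parts_sum
  have := card_le_sum (s := P.parts) (fun x hx => P.parts_pos hx)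
  omega

/-! ### Adding a constant to all parts and appending copies of it -/

section Decomp

variable {n m k r : ℕ} (P : n.Partition) (μ : m.Partition)

lemma sum_aux (t : Multiset ℕ) :
    (t.map (· + k) + Multiset.replicate r k).sum = t.sum + (Multiset.card t + r) * k := by
  rw [Multiset.sum_add, Multiset.sum_replicate, smul_eq_mul]
  have h1 : (t.map (· + k)).sum = t.sum + Multiset.card t * k := by
    rw [show ((· + k) : ℕ → ℕ) = (fun x => id x + (fun _ : ℕ => k) x) from rfl,
      Multiset.sum_map_add, Multiset.map_id, Multiset.map_const', Multiset.sum_replicate,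
      smul_eq_mul]
  rw [h1]; ring

variable (hparts : P.parts = μ.parts.map (· + k) + Multiset.replicate r k)

include hparts

lemma dl_decomp : dl P = (dl μ).map (· + k) ++ List.replicate r k := by
  apply dl_unique
  · rw [hparts, ← dl_coe μ, ← Multiset.coe_add]
    congr 1
  · rw [List.pairwise_append]
    refine ⟨(dl_sorted μ).map _ (fun a b h => by omega), ?_, ?_⟩
    · simp [List.pairwise_replicate]
    · intro a ha b hb
      obtain ⟨x, _, rfl⟩ := List.mem_map.1 ha
      have : b = k := List.eq_of_mem_replicate hb
      omega

lemma card_decomp : Multiset.card P.parts = Multiset.card μ.parts + r := by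
  rw [hparts]; simp

lemma sum_decomp : n = m + (Multiset.card μ.parts + r) * k := by
  have h := P.parts_sum
  rw [hparts, sum_aux] at h
  rw [← h, μ.parts_sum]

lemma nthPart_decomp_lt {i : ℕ} (hi : i < Multiset.card μ.parts) :
    nthPart P i = nthPart μ i + k := by
  rw [nthPart_def, nthPart_def, dl_decomp P μ hparts]
  have hi' : i < ((dl μ).map (· + k)).length := by
    rw [List.length_map, dl_length]; exact hi
  have hi'' : i < (dl μ).length := by rw [dl_length]; exact hi
  rw [List.getD_append _ _ _ _ hi', List.getD_eq_getElem _ _ hi', List.getElem_map,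
    List.getD_eq_getElem _ _ hi'']

lemma nthPart_decomp_mid {i : ℕ} (h1 : Multiset.card μ.parts ≤ i)
    (h2 : i < Multiset.card μ.parts + r) : nthPart P i = k := by
  rw [nthPart_def, dl_decomp P μ hparts]
  have hl : ((dl μ).map (· + k)).length ≤ i := by rw [List.length_map, dl_length]; exact h1
  rw [List.getD_append_right _ _ _ _ hl]
  have : i - ((dl μ).map (· + k)).length < (List.replicate r k).length := by
    rw [List.length_replicate, List.length_map, dl_length]; omega
  rw [List.getD_eq_getElem _ _ this, List.getElem_replicate]

lemma count_decomp (p : ℕ) :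
    P.parts.count p =
      (if k ≤ p then μ.parts.count (p - k) else 0) + (if p = k then r else 0) := by
  rw [hparts, Multiset.count_add, Multiset.count_replicate]
  congr 1
  · by_cases h : k ≤ p
    · rw [if_pos h]
      have hp : p = (p - k) + k := by omega
      rw [hp]
      have := Multiset.count_map_eq_count' (· + k) μ.parts
        (fun a b hab => by simpa using hab) (p - k)
      simpa using this
    · rw [if_neg h, Multiset.count_eq_zero]
      intro hmem
      obtain ⟨x, _, rfl⟩ := Multiset.mem_map.1 hmem
      omega
  · by_cases h : p = k
    · simp [h]
    · rw [if_neg (fun hh => h hh.symm), if_neg h]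

lemma nthPart_sub (h3 : 3 ∣ Multiset.card μ.parts + r) {i a b : ℕ}
    (ha : i * 3 ≤ a) (hb : b ≤ i * 3 + 2) (hab : a < b) :
    nthPart P a - nthPart P b = nthPart μ a - nthPart μ b := by
  have hcard : Multiset.card P.parts = Multiset.card μ.parts + r := card_decomp P μ hparts
  set c := Multiset.card μ.parts with hc
  by_cases hT : i * 3 + 3 ≤ c + r
  · have hbT : b < c + r := by omega
    have haT : a < c + r := by omega
    rcases lt_or_ge b c with h1 | h1
    · rw [nthPart_decomp_lt P μ hparts (by omega), nthPart_decomp_lt P μ hparts h1]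
      exact Nat.add_sub_add_right _ _ _
    · rcases lt_or_ge a c with h2 | h2
      · rw [nthPart_decomp_lt P μ hparts h2, nthPart_decomp_mid P μ hparts h1 hbT,
          nthPart_eq_zero μ h1]
        omega
      · rw [nthPart_decomp_mid P μ hparts h2 haT, nthPart_decomp_mid P μ hparts h1 hbT,
          nthPart_eq_zero μ h2, nthPart_eq_zero μ h1]
        omega
  · have hTa : c + r ≤ i * 3 := by omega
    rw [nthPart_eq_zero P (by omega), nthPart_eq_zero P (by omega),
      nthPart_eq_zero μ (by omega), nthPart_eq_zero μ (by omega)]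

lemma altSum_decomp (h3 : 3 ∣ Multiset.card μ.parts + r)
    {j : ℕ} (hj : j = 1 ∨ j = 2) : altSumType 3 P j = altSumType 3 μ j := by
  have hmn : m ≤ n := by
    have := sum_decomp P μ hparts
    nlinarith
  unfold altSumType
  have hterm : ∀ i : ℕ, nthPart P (i * 3 + (j - 1)) - nthPart P (i * 3 + j)
      = nthPart μ (i * 3 + (j - 1)) - nthPart μ (i * 3 + j) := by
    intro i
    apply nthPart_sub P μ hparts h3 (i := i) <;> omega
  rw [Finset.sum_congr rfl (fun i _ => hterm i)]
  symm
  apply Finset.sum_subset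
  · exact Finset.range_subset_range.2 (by omega)
  · intro i hi hni
    simp only [Finset.mem_range] at hi hni
    have hcm : Multiset.card μ.parts ≤ m := card_le μ
    rw [nthPart_eq_zero μ (by omega)]
    simp

end Decomp

/-! ### The smallest part -/

/-- Smallest part. -/
def minPart {n : ℕ} (P : n.Partition) : ℕ := (P.parts.sort (· ≤ ·)).headD 0

lemma minPart_mem {n : ℕ} (P : n.Partition) (h : P.parts ≠ 0) : minPart P ∈ P.parts := by
  have hne : P.parts.sort (· ≤ ·) ≠ [] := by
    intro hl
    apply h
    rw [← Multiset.sort_eq P.parts (· ≤ ·), hl]; rfl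
  rw [← Multiset.mem_sort (· ≤ ·), minPart]
  cases hL : P.parts.sort (· ≤ ·) with
  | nil => exact absurd hL hne
  | cons a l => simp

lemma minPart_le {n : ℕ} (P : n.Partition) {p : ℕ} (hp : p ∈ P.parts) : minPart P ≤ p := by
  rw [← Multiset.mem_sort (· ≤ ·)] at hp
  rw [minPart]
  cases hL : P.parts.sort (· ≤ ·) with
  | nil => rw [hL] at hp; simp at hp
  | cons a l =>
    have hs := Multiset.pairwise_sort P.parts (· ≤ ·)
    rw [hL] at hp hs
    rw [List.pairwise_cons] at hs
    rcases List.mem_cons.1 hp with rfl | hmem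
    · simp
    · simpa using hs.1 p hmem

lemma minPart_eq {n : ℕ} (P : n.Partition) (x : ℕ) (hmem : x ∈ P.parts)
    (hle : ∀ p ∈ P.parts, x ≤ p) : minPart P = x := by
  have h : P.parts ≠ 0 := fun h0 => by simp [h0] at hmem
  exact le_antisymm (minPart_le P hmem) (hle _ (minPart_mem P h))

lemma minPart_pos {n : ℕ} (P : n.Partition) (h : P.parts ≠ 0) : 0 < minPart P :=
  P.parts_pos (minPart_mem P h)

/-- Canonical decomposition of a nonempty partition: strip off the minimum. -/
lemma parts_decomp {n : ℕ} (P : n.Partition) (h : P.parts ≠ 0) :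
    P.parts = ((P.parts.filter (minPart P < ·)).map (· - minPart P)).map (· + minPart P)
      + Multiset.replicate (P.parts.count (minPart P)) (minPart P) := by
  set k := minPart P with hk
  rw [Multiset.map_map]
  have h1 : (P.parts.filter (k < ·)).map ((· + k) ∘ (· - k)) = P.parts.filter (k < ·) := by
    rw [show Multiset.map ((· + k) ∘ (· - k)) (P.parts.filter (k < ·))
        = Multiset.map (fun x => x) (P.parts.filter (k < ·)) from
      Multiset.map_congr rfl (fun x hx => by
        have := (Multiset.mem_filter.1 hx).2
        simp only [Function.comp_apply]; omega)]
    exact Multiset.map_id' _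
  rw [h1, ← Multiset.filter_eq']
  have h2 : P.parts.filter (fun x => x = k) = P.parts.filter (fun x => ¬ k < x) := by
    apply Multiset.filter_congr
    intro x hx
    have := minPart_le P hx
    constructor
    · intro hxk; omega
    · intro hxk; omega
  rw [h2, Multiset.filter_add_not]

/-! ### strip and build -/

/-- The partition obtained by subtracting `k` from every part (dropping what vanishes). -/
def strip {n m : ℕ} (P : n.Partition) (k : ℕ)
    (hsum : ((P.parts.filter (k < ·)).map (· - k)).sum = m) : m.Partition where
  parts := (P.parts.filter (k < ·)).map (· - k)
  parts_pos := by
    intro x hx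
    obtain ⟨y, hy, rfl⟩ := Multiset.mem_map.1 hx
    have := (Multiset.mem_filter.1 hy).2
    omega
  parts_sum := hsum

/-- The partition obtained by adding `k` to every part and appending `r` parts equal to `k`. -/
def build {m n : ℕ} (μ : m.Partition) (k r : ℕ) (hk : 0 < k)
    (hsum : (μ.parts.map (· + k) + Multiset.replicate r k).sum = n) : n.Partition where
  parts := μ.parts.map (· + k) + Multiset.replicate r k
  parts_pos := by
    intro x hx
    rcases Multiset.mem_add.1 hx with h | h
    · obtain ⟨y, _, rfl⟩ := Multiset.mem_map.1 h
      omega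
    · rw [Multiset.eq_of_mem_replicate h]; exact hk
  parts_sum := hsum

lemma strip_parts {n m : ℕ} (P : n.Partition) (k : ℕ) (hsum) :
    (strip (m := m) P k hsum).parts = (P.parts.filter (k < ·)).map (· - k) := rfl

lemma build_parts {m n : ℕ} (μ : m.Partition) (k r : ℕ) (hk : 0 < k) (hsum) :
    (build (n := n) μ k r hk hsum).parts = μ.parts.map (· + k) + Multiset.replicate r k := rfl

/-- strip ∘ build : the filtered-mapped multiset recovers μ. -/
lemma strip_build {m : ℕ} (μ : m.Partition) (k r : ℕ) :
    (((μ.parts.map (· + k) + Multiset.replicate r k).filter (k < ·)).map (· - k)) = μ.parts := by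
  rw [Multiset.filter_add]
  have h1 : (μ.parts.map (· + k)).filter (k < ·) = μ.parts.map (· + k) := by
    rw [Multiset.filter_eq_self]
    intro x hx
    obtain ⟨y, hy, rfl⟩ := Multiset.mem_map.1 hx
    have := μ.parts_pos hy
    omega
  have h2 : (Multiset.replicate r k).filter (k < ·) = 0 := by
    rw [Multiset.filter_eq_nil]
    intro x hx
    rw [Multiset.eq_of_mem_replicate hx]
    omega
  rw [h1, h2, add_zero, Multiset.map_map]
  rw [show Multiset.map ((· - k) ∘ (· + k)) μ.parts = Multiset.map (fun x => x) μ.parts from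
    Multiset.map_congr rfl (fun x hx => by simp)]
  exact Multiset.map_id' _

lemma min_of_build {m n k r : ℕ} (μ : m.Partition) (P : n.Partition) (hk : 0 < k) (hr : 0 < r)
    (hparts : P.parts = μ.parts.map (· + k) + Multiset.replicate r k) :
    minPart P = k := by
  apply minPart_eq
  · rw [hparts, Multiset.mem_add]
    right
    exact Multiset.mem_replicate.2 ⟨hr.ne', rfl⟩
  · intro p hp
    rw [hparts, Multiset.mem_add] at hp
    rcases hp with h | h
    · obtain ⟨x, _, rfl⟩ := Multiset.mem_map.1 h
      omega
    · rw [Multiset.eq_of_mem_replicate h]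

lemma count_min_of_build {m n k r : ℕ} (μ : m.Partition) (P : n.Partition)
    (hparts : P.parts = μ.parts.map (· + k) + Multiset.replicate r k) :
    P.parts.count k = r := by
  rw [count_decomp P μ hparts k, if_pos le_rfl, if_pos rfl, Nat.sub_self]
  have h0 : μ.parts.count 0 = 0 :=
    Multiset.count_eq_zero.2 (fun hmem => by have := μ.parts_pos hmem; omega)
  rw [h0, zero_add]

/-! ### The counted predicate -/

/-- The predicate counted by `aN`. -/
def Q (N s1 s2 : ℕ) {n : ℕ} (P : n.Partition) : Prop :=
  P.parts.card = N ∧ (∀ p, P.parts.count p ≤ 2) ∧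
    altSumType 3 P 1 = s1 ∧ altSumType 3 P 2 = s2

lemma aN_eq (N s1 s2 n : ℕ) : aN N s1 s2 n = Nat.card {P : n.Partition // Q N s1 s2 P} := rfl

lemma Q_congr {n : ℕ} {P : n.Partition} {M M' s1 s2 : ℕ} (h : M = M') (hQ : Q M s1 s2 P) :
    Q M' s1 s2 P := h ▸ hQ

/-- Everything needed about the forward construction. -/
lemma fwd_spec {N s1 s2 n : ℕ} (hN : 0 < N) (P : n.Partition) (hP : Q (3 * N) s1 s2 P) :
    minPart P ∈ Finset.Icc 1 n ∧
    ((P.parts.filter (minPart P < ·)).map (· - minPart P)).sum = n - 3 * N * minPart P ∧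
    (P.parts.count (minPart P) = 1 ∨ P.parts.count (minPart P) = 2) ∧
    ∀ (hs : ((P.parts.filter (minPart P < ·)).map (· - minPart P)).sum
        = n - 3 * N * minPart P),
      Q (3 * N - P.parts.count (minPart P)) s1 s2 (strip P (minPart P) hs) := by
  obtain ⟨hcard, hcount, ha1, ha2⟩ := hP
  have hne : P.parts ≠ 0 := by
    intro h0
    rw [h0] at hcard
    simp at hcard
    omega
  set k := minPart P with hkdef
  have hk : 0 < k := minPart_pos P hne
  set r := P.parts.count k with hrdef
  have hr1 : 0 < r := Multiset.count_pos.2 (minPart_mem P hne)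
  have hr2 : r ≤ 2 := hcount k
  set t : Multiset ℕ := (P.parts.filter (k < ·)).map (· - k) with htdef
  have hdec : P.parts = t.map (· + k) + Multiset.replicate r k := parts_decomp P hne
  have hcards : Multiset.card P.parts = Multiset.card t + r := by
    rw [hdec]; simp
  have hct : Multiset.card t + r = 3 * N := by rw [← hcards, hcard]
  have hsum0 : n = t.sum + (Multiset.card t + r) * k := by
    have h := P.parts_sum
    rw [hdec, sum_aux] at h
    omega
  have hkn : k ≤ n := by
    have h2 : k ≤ 3 * N * k := Nat.le_mul_of_pos_left k (by omega)
    rw [hct] at hsum0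
    have h3 : 0 ≤ t.sum := Nat.zero_le _
    linarith
  have hsum : t.sum = n - 3 * N * k := by
    rw [hct] at hsum0
    omega
  refine ⟨Finset.mem_Icc.2 ⟨hk, hkn⟩, hsum, ?_, ?_⟩
  · omega
  · intro hs
    have hparts : P.parts = (strip P k hs).parts.map (· + k) + Multiset.replicate r k := by
      rw [strip_parts]; exact hdec
    have hcards' : Multiset.card (strip P k hs).parts = 3 * N - r := by
      rw [strip_parts, ← htdef]; omega
    refine ⟨hcards', ?_, ?_, ?_⟩
    · intro p
      rcases Nat.eq_zero_or_pos p with rfl | hp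
      · rw [Multiset.count_eq_zero.2 (fun hmem => by
          have := (strip P k hs).parts_pos hmem; omega)]
        omega
      · have := count_decomp P (strip P k hs) hparts (p + k)
        rw [if_pos (by omega), if_neg (by omega), Nat.add_sub_cancel, add_zero] at this
        rw [← this]
        exact hcount (p + k)
    · rw [← ha1]
      exact (altSum_decomp P (strip P k hs) hparts
        (by rw [hcards']; exact ⟨N, by omega⟩) (Or.inl rfl)).symm
    · rw [← ha2]
      exact (altSum_decomp P (strip P k hs) hparts
        (by rw [hcards']; exact ⟨N, by omega⟩) (Or.inr rfl)).symm

/-- Everything needed about the backward construction. -/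
lemma bwd_spec {N s1 s2 n : ℕ} (hN : 0 < N) (k : ℕ) (hk : k ∈ Finset.Icc 1 n)
    (r : ℕ) (hr1 : 0 < r) (hr2 : r ≤ 2) (μ : (n - 3 * N * k).Partition)
    (hμ : Q (3 * N - r) s1 s2 μ) :
    (μ.parts.map (· + k) + Multiset.replicate r k).sum = n ∧
    ∀ (hs : (μ.parts.map (· + k) + Multiset.replicate r k).sum = n),
      Q (3 * N) s1 s2 (build μ k r (Finset.mem_Icc.1 hk).1 hs) := by
  obtain ⟨hcard, hcount, ha1, ha2⟩ := hμ
  have hk1 : 0 < k := (Finset.mem_Icc.1 hk).1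
  have hcpos : 0 < Multiset.card μ.parts := by rw [hcard]; omega
  have hne : μ.parts ≠ 0 := by
    intro h0; rw [h0] at hcpos; simp at hcpos
  have hmpos : 0 < n - 3 * N * k := by
    have h1 := card_le μ
    omega
  have hNk : 3 * N * k ≤ n := by omega
  have hsum : (μ.parts.map (· + k) + Multiset.replicate r k).sum = n := by
    rw [sum_aux, μ.parts_sum, hcard]
    have : (3 * N - r + r) = 3 * N := by omega
    rw [this]
    omega
  refine ⟨hsum, fun hs => ?_⟩
  have hparts : (build μ k r hk1 hs).parts
      = μ.parts.map (· + k) + Multiset.replicate r k := rfl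
  refine ⟨?_, ?_, ?_, ?_⟩
  · rw [hparts]
    simp only [Multiset.card_add, Multiset.card_map, Multiset.card_replicate]
    omega
  · intro p
    rw [count_decomp (build μ k r hk1 hs) μ hparts p]
    have h0 : μ.parts.count 0 = 0 :=
      Multiset.count_eq_zero.2 (fun hmem => by have := μ.parts_pos hmem; omega)
    by_cases hpk : p = k
    · subst hpk
      rw [if_pos le_rfl, if_pos rfl, Nat.sub_self, h0]
      omega
    · rw [if_neg hpk]
      split
      · exact Nat.le_trans (by omega) (hcount (p - k))
      · omega
  · rw [← ha1]
    exact altSum_decomp (build μ k r hk1 hs) μ hparts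
      (by rw [hcard]; exact ⟨N, by omega⟩) (Or.inl rfl)
  · rw [← ha2]
    exact altSum_decomp (build μ k r hk1 hs) μ hparts
      (by rw [hcard]; exact ⟨N, by omega⟩) (Or.inr rfl)

/-! ### The bijection -/

variable (N s1 s2 n : ℕ)

/-- The sigma type of the right-hand side. -/
abbrev RHS : Type :=
  Σ k : (Finset.Icc 1 n), ({P : (n - 3 * N * (k : ℕ)).Partition // Q (3 * N - 1) s1 s2 P} ⊕
    {P : (n - 3 * N * (k : ℕ)).Partition // Q (3 * N - 2) s1 s2 P})

variable {N s1 s2 n}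

/-- The forward map. -/
noncomputable def fwd (hN : 0 < N) (x : {P : n.Partition // Q (3 * N) s1 s2 P}) :
    RHS N s1 s2 n :=
  ⟨⟨minPart x.1, (fwd_spec hN x.1 x.2).1⟩,
    if h : x.1.parts.count (minPart x.1) = 1 then
      Sum.inl ⟨strip x.1 (minPart x.1) (fwd_spec hN x.1 x.2).2.1,
        Q_congr (by rw [h]) ((fwd_spec hN x.1 x.2).2.2.2 (fwd_spec hN x.1 x.2).2.1)⟩
    else
      Sum.inr ⟨strip x.1 (minPart x.1) (fwd_spec hN x.1 x.2).2.1, by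
        have h2 : x.1.parts.count (minPart x.1) = 2 := by
          rcases (fwd_spec hN x.1 x.2).2.2.1 with h1 | h1
          · exact absurd h1 h
          · exact h1
        exact Q_congr (by rw [h2]) ((fwd_spec hN x.1 x.2).2.2.2 (fwd_spec hN x.1 x.2).2.1)⟩⟩

/-- The backward map. -/
noncomputable def bwd (hN : 0 < N) (y : RHS N s1 s2 n) :
    {P : n.Partition // Q (3 * N) s1 s2 P} :=
  match y with
  | ⟨⟨k, hk⟩, Sum.inl ⟨μ, hμ⟩⟩ =>
      ⟨build μ k 1 (Finset.mem_Icc.1 hk).1 (bwd_spec hN k hk 1 one_pos one_le_two μ hμ).1,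
        (bwd_spec hN k hk 1 one_pos one_le_two μ hμ).2 _⟩
  | ⟨⟨k, hk⟩, Sum.inr ⟨μ, hμ⟩⟩ =>
      ⟨build μ k 2 (Finset.mem_Icc.1 hk).1 (bwd_spec hN k hk 2 two_pos le_rfl μ hμ).1,
        (bwd_spec hN k hk 2 two_pos le_rfl μ hμ).2 _⟩

lemma bwd_fwd (hN : 0 < N) (x : {P : n.Partition // Q (3 * N) s1 s2 P}) :
    bwd hN (fwd hN x) = x := by
  have hne : x.1.parts ≠ 0 := by
    intro h0
    have hcard := x.2.1
    rw [h0] at hcard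
    simp at hcard
    omega
  have hdec := parts_decomp x.1 hne
  by_cases h : x.1.parts.count (minPart x.1) = 1
  · rw [fwd, dif_pos h, bwd]
    apply Subtype.ext
    apply Nat.Partition.ext
    rw [build_parts, strip_parts]
    conv_rhs => rw [hdec]
    rw [h]
  · have h2 : x.1.parts.count (minPart x.1) = 2 := by
      rcases (fwd_spec hN x.1 x.2).2.2.1 with h1 | h1
      · exact absurd h1 h
      · exact h1
    rw [fwd, dif_neg h, bwd]
    apply Subtype.ext
    apply Nat.Partition.ext
    rw [build_parts, strip_parts]
    conv_rhs => rw [hdec]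
    rw [h2]

lemma bwd_inj (hN : 0 < N) : Function.Injective (bwd (N := N) (s1 := s1) (s2 := s2) (n := n) hN) := by
  rintro ⟨⟨k, hk⟩, (⟨μ, hμ⟩ | ⟨μ, hμ⟩)⟩ ⟨⟨k', hk'⟩, (⟨μ', hμ'⟩ | ⟨μ', hμ'⟩)⟩ heq <;>
    rw [bwd, bwd] at heq <;>
    have hPeq := congrArg (fun z => (Subtype.val z).parts) heq <;>
    simp only [build_parts] at hPeq
  -- case 1 : inl / inl
  · have hk1 : 0 < k := (Finset.mem_Icc.1 hk).1
    have hk1' : 0 < k' := (Finset.mem_Icc.1 hk').1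
    set X : n.Partition := build μ k 1 hk1 (bwd_spec hN k hk 1 one_pos one_le_two μ hμ).1
      with hXdef
    have hXparts : X.parts = μ.parts.map (· + k) + Multiset.replicate 1 k := rfl
    have hXparts' : X.parts = μ'.parts.map (· + k') + Multiset.replicate 1 k' := by
      rw [hXparts, hPeq]
    have e1 : minPart X = k := min_of_build μ X hk1 one_pos hXparts
    have e2 : minPart X = k' := min_of_build μ' X hk1' one_pos hXparts'
    have ekk : k = k' := by rw [← e1, e2]
    subst ekk
    have hμμ : μ = μ' := by
      apply Nat.Partition.ext
      have g1 := strip_build μ k 1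
      have g2 := strip_build μ' k 1
      rw [← hXparts] at g1
      rw [← hXparts'] at g2
      rw [← g1, ← g2]
    subst hμμ
    rfl
  -- case 2 : inl / inr (contradiction)
  · exfalso
    have hk1 : 0 < k := (Finset.mem_Icc.1 hk).1
    have hk1' : 0 < k' := (Finset.mem_Icc.1 hk').1
    set X : n.Partition := build μ k 1 hk1 (bwd_spec hN k hk 1 one_pos one_le_two μ hμ).1
      with hXdef
    have hXparts : X.parts = μ.parts.map (· + k) + Multiset.replicate 1 k := rfl
    have hXparts' : X.parts = μ'.parts.map (· + k') + Multiset.replicate 2 k' := by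
      rw [hXparts, hPeq]
    have e1 : minPart X = k := min_of_build μ X hk1 one_pos hXparts
    have e2 : minPart X = k' := min_of_build μ' X hk1' two_pos hXparts'
    have ekk : k = k' := by rw [← e1, e2]
    subst ekk
    have c1 : X.parts.count k = 1 := count_min_of_build μ X hXparts
    have c2 : X.parts.count k = 2 := count_min_of_build μ' X hXparts'
    omega
  -- case 3 : inr / inl (contradiction)
  · exfalso
    have hk1 : 0 < k := (Finset.mem_Icc.1 hk).1
    have hk1' : 0 < k' := (Finset.mem_Icc.1 hk').1
    set X : n.Partition := build μ k 2 hk1 (bwd_spec hN k hk 2 two_pos le_rfl μ hμ).1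
      with hXdef
    have hXparts : X.parts = μ.parts.map (· + k) + Multiset.replicate 2 k := rfl
    have hXparts' : X.parts = μ'.parts.map (· + k') + Multiset.replicate 1 k' := by
      rw [hXparts, hPeq]
    have e1 : minPart X = k := min_of_build μ X hk1 two_pos hXparts
    have e2 : minPart X = k' := min_of_build μ' X hk1' one_pos hXparts'
    have ekk : k = k' := by rw [← e1, e2]
    subst ekk
    have c1 : X.parts.count k = 2 := count_min_of_build μ X hXparts
    have c2 : X.parts.count k = 1 := count_min_of_build μ' X hXparts'
    omega
  -- case 4 : inr / inr
  · have hk1 : 0 < k := (Finset.mem_Icc.1 hk).1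
    have hk1' : 0 < k' := (Finset.mem_Icc.1 hk').1
    set X : n.Partition := build μ k 2 hk1 (bwd_spec hN k hk 2 two_pos le_rfl μ hμ).1
      with hXdef
    have hXparts : X.parts = μ.parts.map (· + k) + Multiset.replicate 2 k := rfl
    have hXparts' : X.parts = μ'.parts.map (· + k') + Multiset.replicate 2 k' := by
      rw [hXparts, hPeq]
    have e1 : minPart X = k := min_of_build μ X hk1 two_pos hXparts
    have e2 : minPart X = k' := min_of_build μ' X hk1' two_pos hXparts'
    have ekk : k = k' := by rw [← e1, e2]
    subst ekk
    have hμμ : μ = μ' := by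
      apply Nat.Partition.ext
      have g1 := strip_build μ k 2
      have g2 := strip_build μ' k 2
      rw [← hXparts] at g1
      rw [← hXparts'] at g2
      rw [← g1, ← g2]
    subst hμμ
    rfl

lemma fwd_bijective (hN : 0 < N) :
    Function.Bijective (fwd (N := N) (s1 := s1) (s2 := s2) (n := n) hN) := by
  constructor
  · intro a b hab
    rw [← bwd_fwd hN a, ← bwd_fwd hN b, hab]
  · intro y
    exact ⟨bwd hN y, bwd_inj hN (bwd_fwd hN (bwd hN y))⟩

end Stmt9Aux

open Stmt9Aux in
theorem stmt9 (N : ℕ) (hN : 1 ≤ N) (s1 s2 n : ℕ) (hn : 1 ≤ n) :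
    aN (3 * N) s1 s2 n =
      ∑ k ∈ Finset.Icc 1 n,
        (aN (3 * N - 1) s1 s2 (n - 3 * N * k) + aN (3 * N - 2) s1 s2 (n - 3 * N * k)) := by
  classical
  have hN' : 0 < N := hN
  have hcongr : aN (3 * N) s1 s2 n = Nat.card (RHS N s1 s2 n) := by
    rw [aN_eq]
    exact Nat.card_congr (Equiv.ofBijective _ (fwd_bijective hN'))
  rw [hcongr]
  rw [Nat.card_eq_fintype_card, Fintype.card_sigma]
  have hterm : ∀ k : (Finset.Icc 1 n),
      Fintype.card ({P : (n - 3 * N * (k : ℕ)).Partition // Q (3 * N - 1) s1 s2 P} ⊕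
        {P : (n - 3 * N * (k : ℕ)).Partition // Q (3 * N - 2) s1 s2 P})
      = aN (3 * N - 1) s1 s2 (n - 3 * N * (k : ℕ)) + aN (3 * N - 2) s1 s2 (n - 3 * N * (k : ℕ)) := by
    intro k
    rw [Fintype.card_sum, aN_eq, aN_eq, Nat.card_eq_fintype_card, Nat.card_eq_fintype_card]
  rw [Finset.sum_congr rfl (fun k _ => hterm k)]
  exact Finset.sum_coe_sort (Finset.Icc 1 n)
    (fun k => aN (3 * N - 1) s1 s2 (n - 3 * N * k) + aN (3 * N - 2) s1 s2 (n - 3 * N * k))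
end

section
/- For all integers N ≥ 1, all nonnegative integers Σ_1, Σ_2, and all positive integers n, a_{3N+1}(Σ_1, Σ_2; n) = Σ_{k ≥ 1} [ a_{3N}(Σ_1 − k, Σ_2; n − (3N+1)k) + a_{3N−1}(Σ_1 − k, Σ_2; n − (3N+1)k) ], where terms with Σ_1 − k < 0 or n − (3N+1)k < 0 are zero. -/
open List

namespace S10


lemma length_le_sum {l : List ℕ} (h : ∀ x ∈ l, 0 < x) : l.length ≤ l.sum := by
  induction l with
  | nil => simp
  | cons a t ih =>
    have h1 := h a mem_cons_self
    have h2 := ih (fun x hx => h x (mem_cons_of_mem _ hx))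
    simp only [length_cons, sum_cons]; omega

lemma sum_map_sub {l : List ℕ} {k : ℕ} (h : ∀ x ∈ l, k ≤ x) :
    l.sum = (l.map (· - k)).sum + l.length * k := by
  induction l with
  | nil => simp
  | cons a t ih =>
    have h1 := h a mem_cons_self
    have h2 := ih (fun x hx => h x (mem_cons_of_mem _ hx))
    simp only [map_cons, sum_cons, length_cons, Nat.succ_mul]
    omega

lemma count_map_sub {l : List ℕ} {k p : ℕ} (h : ∀ x ∈ l, k < x) :
    (l.map (· - k)).count p = l.count (p + k) := by
  induction l with
  | nil => simp
  | cons a t ih =>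
    have h1 := h a mem_cons_self
    have h2 := ih (fun x hx => h x (mem_cons_of_mem _ hx))
    simp only [map_cons, count_cons, h2]
    congr 1
    by_cases hc : a = p + k
    · simp [hc]
    · have : ¬ (a - k = p) := by omega
      simp [this, hc]

lemma count_map_add {l : List ℕ} {k p : ℕ} :
    (l.map (· + k)).count p = if k ≤ p then l.count (p - k) else 0 := by
  induction l with
  | nil => simp
  | cons a t ih =>
    simp only [map_cons, count_cons, ih]
    by_cases hkp : k ≤ p
    · simp only [if_pos hkp]
      congr 1
      by_cases hc : a = p - k
      · have h3 : a + k = p := by omega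
        simp [hc, h3, Nat.sub_add_cancel hkp]
      · have : ¬ (a + k = p) := by omega
        simp [this, hc]
    · have : ¬ (a + k = p) := by omega
      simp [this, hkp]

lemma getD_anti {l : List ℕ} (hs : l.Pairwise (· ≥ ·)) {i j : ℕ} (hij : i ≤ j) :
    l.getD j 0 ≤ l.getD i 0 := by
  rcases Nat.lt_or_ge j l.length with hj | hj
  · have hi : i < l.length := lt_of_le_of_lt hij hj
    rw [getD_eq_getElem _ _ hi, getD_eq_getElem _ _ hj]
    rcases Nat.eq_or_lt_of_le hij with rfl | h
    · exact le_refl _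
    · exact (pairwise_iff_getElem.1 hs) i j hi hj h
  · rw [getD_eq_default _ _ hj]
    exact Nat.zero_le _

lemma getD_mem {l : List ℕ} {i : ℕ} (h : i < l.length) : l.getD i 0 ∈ l := by
  rw [getD_eq_getElem _ _ h]; exact getElem_mem h

lemma getD_map_take {l : List ℕ} {t i k : ℕ} (hi : i < t) (ht : t ≤ l.length) :
    ((l.take t).map (· - k)).getD i 0 = l.getD i 0 - k := by
  have h2 : i < l.length := lt_of_lt_of_le hi ht
  have h1 : i < ((l.take t).map (· - k)).length := by
    simp [length_take]; omega
  rw [getD_eq_getElem _ _ h1, getD_eq_getElem _ _ h2]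
  simp [getElem_take]

lemma getD_map_add {l : List ℕ} {i k : ℕ} (hi : i < l.length) :
    ((l.map (· + k))).getD i 0 = l.getD i 0 + k := by
  have h1 : i < (l.map (· + k)).length := by simpa using hi
  rw [getD_eq_getElem _ _ h1, getD_eq_getElem _ _ hi]
  simp

lemma drop_eq_single {l : List ℕ} {t : ℕ} (h : l.length = t + 1) :
    l.drop t = [l.getD t 0] := by
  have ht : t < l.length := by omega
  rw [drop_eq_getElem_cons ht, getD_eq_getElem _ _ ht, drop_eq_nil_of_le (by omega)]

lemma drop_eq_pair {l : List ℕ} {t : ℕ} (h : l.length = t + 2) :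
    l.drop t = [l.getD t 0, l.getD (t+1) 0] := by
  have ht : t < l.length := by omega
  have ht1 : t + 1 < l.length := by omega
  rw [drop_eq_getElem_cons ht, drop_eq_getElem_cons ht1,
    getD_eq_getElem _ _ ht, getD_eq_getElem _ _ ht1, drop_eq_nil_of_le (by omega)]

lemma drop_eq_triple {l : List ℕ} {t : ℕ} (h : l.length = t + 3) :
    l.drop t = [l.getD t 0, l.getD (t+1) 0, l.getD (t+2) 0] := by
  have ht : t < l.length := by omega
  have ht1 : t + 1 < l.length := by omega
  have ht2 : t + 2 < l.length := by omega
  rw [drop_eq_getElem_cons ht, drop_eq_getElem_cons ht1, drop_eq_getElem_cons ht2,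
    getD_eq_getElem _ _ ht, getD_eq_getElem _ _ ht1, getD_eq_getElem _ _ ht2,
    drop_eq_nil_of_le (by omega)]



def dl {n : ℕ} (P : n.Partition) : List ℕ := (P.parts.sort (· ≤ ·)).reverse

lemma dl_coe {n : ℕ} (P : n.Partition) : ((dl P : List ℕ) : Multiset ℕ) = P.parts := by
  simp [dl]

lemma dl_sorted {n : ℕ} (P : n.Partition) : (dl P).Pairwise (· ≥ ·) := by
  have := P.parts.pairwise_sort (· ≤ ·)
  exact pairwise_reverse.2 this

lemma dl_pos {n : ℕ} (P : n.Partition) : ∀ x ∈ dl P, 0 < x := by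
  intro x hx
  apply P.parts_pos
  rw [← dl_coe P]
  exact hx

lemma dl_sum {n : ℕ} (P : n.Partition) : (dl P).sum = n := by
  have := congrArg Multiset.sum (dl_coe P)
  simpa [P.parts_sum] using this

lemma dl_length {n : ℕ} (P : n.Partition) : (dl P).length = Multiset.card P.parts := by
  have := congrArg Multiset.card (dl_coe P)
  simpa using this

lemma dl_count {n : ℕ} (P : n.Partition) (p : ℕ) : (dl P).count p = P.parts.count p := by
  have := congrArg (Multiset.count p) (dl_coe P)
  simpa using this

lemma dl_length_le {n : ℕ} (P : n.Partition) : (dl P).length ≤ n := by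
  have := length_le_sum (dl_pos P)
  rwa [dl_sum P] at this

lemma partition_ext {n : ℕ} {P Q : n.Partition} (h : P.parts = Q.parts) : P = Q := by
  cases P; cases Q; simpa using h

def mk (L : List ℕ) (hpos : ∀ x ∈ L, 0 < x) {n : ℕ} (hsum : L.sum = n) : n.Partition :=
  ⟨(L : Multiset ℕ), fun {x} hx => hpos x (by simpa using hx), by simpa using hsum⟩

def triv (n : ℕ) : n.Partition :=
  ⟨Multiset.replicate n 1, fun {x} hx => by simp_all [Multiset.eq_of_mem_replicate hx], by simp⟩

def mkD (L : List ℕ) (n : ℕ) : n.Partition :=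
  if h : (∀ x ∈ L, 0 < x) ∧ L.sum = n then mk L h.1 h.2 else triv n

lemma mkD_parts {L : List ℕ} {n : ℕ} (hpos : ∀ x ∈ L, 0 < x) (hsum : L.sum = n) :
    (mkD L n).parts = (L : Multiset ℕ) := by
  rw [mkD, dif_pos ⟨hpos, hsum⟩]; rfl

lemma dl_mkD {L : List ℕ} {n : ℕ} (hpos : ∀ x ∈ L, 0 < x) (hsum : L.sum = n)
    (hs : L.Pairwise (· ≥ ·)) : dl (mkD L n) = L := by
  have h1 : (mkD L n).parts.sort (· ≤ ·) = L.reverse := by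
    refine (fun p s1 s2 => Perm.eq_of_pairwise' (r := (· ≤ ·)) s1 s2 p) ?_ ?_ ?_
    · apply Multiset.coe_eq_coe.1
      rw [Multiset.sort_eq, mkD_parts hpos hsum]
      simp
    · exact Multiset.pairwise_sort _ _
    · exact pairwise_reverse.2 (by simpa [flip] using hs)
  simp [dl, h1]

def listAlt (L : List ℕ) (j M : ℕ) : ℕ :=
  ∑ i ∈ Finset.range M, (L.getD (i * 3 + (j - 1)) 0 - L.getD (i * 3 + j) 0)

lemma listAlt_stab {L : List ℕ} {j M M' : ℕ} (h : L.length ≤ 3 * M) (hMM : M ≤ M') :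
    listAlt L j M' = listAlt L j M := by
  unfold listAlt
  rw [← Finset.sum_subset (Finset.range_subset_range.2 hMM)]
  intro i hi hni
  have hMi : M ≤ i := by simpa using hni
  have h3 : 3 * M ≤ i * 3 := by omega
  rw [getD_eq_default _ _ (by omega), getD_eq_default _ _ (by omega)]
  simp

lemma listAlt_eq {L : List ℕ} {j M M' : ℕ} (h : L.length ≤ 3 * M) (h' : L.length ≤ 3 * M') :
    listAlt L j M = listAlt L j M' := by
  rcases le_total M M' with hMM | hMM
  · exact (listAlt_stab h hMM).symm
  · exact listAlt_stab h' hMM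

lemma altSumType_eq {n : ℕ} (P : n.Partition) (j M : ℕ) (h : (dl P).length ≤ 3 * M) :
    altSumType 3 P j = listAlt (dl P) j M := by
  have h1 : altSumType 3 P j = listAlt (dl P) j (n + 1) := rfl
  rw [h1]
  exact listAlt_eq (by have := dl_length_le P; omega) h


lemma alt_once_1 {L : List ℕ} {N k : ℕ} (hs : L.Pairwise (· ≥ ·)) (hlen : L.length = 3*N+1)
    (hk : L.getD (3*N) 0 = k) :
    listAlt L 1 (N+1) = listAlt ((L.take (3*N)).map (· - k)) 1 N + k := by
  unfold listAlt
  rw [Finset.sum_range_succ]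
  congr 1
  · apply Finset.sum_congr rfl
    intro i hi
    have hi' : i < N := Finset.mem_range.1 hi
    rw [getD_map_take (show i*3+(1-1) < 3*N by omega) (by omega),
        getD_map_take (show i*3+1 < 3*N by omega) (by omega)]
    have hk1 : k ≤ L.getD (i*3+1) 0 := hk ▸ getD_anti hs (by omega)
    exact (tsub_tsub_tsub_cancel_right hk1).symm
  · rw [getD_eq_default _ _ (n := N*3+1) (by omega)]
    have h0 : N*3 + (1-1) = 3*N := by omega
    rw [h0, hk]
    omega

lemma alt_once_2 {L : List ℕ} {N k : ℕ} (hs : L.Pairwise (· ≥ ·)) (hlen : L.length = 3*N+1)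
    (hk : L.getD (3*N) 0 = k) :
    listAlt L 2 (N+1) = listAlt ((L.take (3*N)).map (· - k)) 2 N := by
  unfold listAlt
  rw [Finset.sum_range_succ]
  have e1 : L.getD (N*3 + (2-1)) 0 = 0 := getD_eq_default _ _ (by omega)
  have e2 : L.getD (N*3 + 2) 0 = 0 := getD_eq_default _ _ (by omega)
  rw [e1, e2]
  simp only [Nat.zero_sub, add_zero]
  apply Finset.sum_congr rfl
  intro i hi
  have hi' : i < N := Finset.mem_range.1 hi
  rw [getD_map_take (show i*3+(2-1) < 3*N by omega) (by omega),
      getD_map_take (show i*3+2 < 3*N by omega) (by omega)]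
  have hk1 : k ≤ L.getD (i*3+2) 0 := hk ▸ getD_anti hs (by omega)
  exact (tsub_tsub_tsub_cancel_right hk1).symm

lemma alt_twice_1 {L : List ℕ} {N k : ℕ} (hs : L.Pairwise (· ≥ ·)) (hlen : L.length = 3*(N+1)+1)
    (hk : L.getD (3*(N+1)) 0 = k) :
    listAlt L 1 (N+2) = listAlt ((L.take (3*N+2)).map (· - k)) 1 (N+1) + k := by
  unfold listAlt
  rw [Finset.sum_range_succ]
  congr 1
  · apply Finset.sum_congr rfl
    intro i hi
    have hi' : i < N + 1 := Finset.mem_range.1 hi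
    rw [getD_map_take (show i*3+(1-1) < 3*N+2 by omega) (by omega),
        getD_map_take (show i*3+1 < 3*N+2 by omega) (by omega)]
    have hk1 : k ≤ L.getD (i*3+1) 0 := hk ▸ getD_anti hs (by omega)
    exact (tsub_tsub_tsub_cancel_right hk1).symm
  · rw [getD_eq_default _ _ (n := (N+1)*3+1) (by omega)]
    have h0 : (N+1)*3 + (1-1) = 3*(N+1) := by omega
    rw [h0, hk]
    omega

lemma alt_twice_2 {L : List ℕ} {N k : ℕ} (hs : L.Pairwise (· ≥ ·)) (hlen : L.length = 3*(N+1)+1)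
    (hk2 : L.getD (3*N+2) 0 = k) :
    listAlt L 2 (N+2) = listAlt ((L.take (3*N+2)).map (· - k)) 2 (N+1) := by
  unfold listAlt
  rw [Finset.sum_range_succ, Finset.sum_range_succ, Finset.sum_range_succ (n := N)]
  have e1 : L.getD ((N+1)*3 + (2-1)) 0 = 0 := getD_eq_default _ _ (by omega)
  have e2 : L.getD ((N+1)*3 + 2) 0 = 0 := getD_eq_default _ _ (by omega)
  rw [e1, e2]
  simp only [Nat.zero_sub, add_zero]
  congr 1
  · apply Finset.sum_congr rfl
    intro i hi
    have hi' : i < N := Finset.mem_range.1 hi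
    rw [getD_map_take (show i*3+(2-1) < 3*N+2 by omega) (by omega),
        getD_map_take (show i*3+2 < 3*N+2 by omega) (by omega)]
    have hk1 : k ≤ L.getD (i*3+2) 0 := hk2 ▸ getD_anti hs (by omega)
    exact (tsub_tsub_tsub_cancel_right hk1).symm
  · rw [getD_map_take (show N*3+(2-1) < 3*N+2 by omega) (by omega),
        getD_eq_default (l := (L.take (3*N+2)).map (· - k)) _ (by simp [length_take]; omega)]
    have h0 : N*3 + 2 = 3*N+2 := by omega
    rw [h0, hk2]
    omega

lemma sum_map_add {l : List ℕ} {k : ℕ} :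
    (l.map (· + k)).sum = l.sum + l.length * k := by
  induction l with
  | nil => simp
  | cons a t ih => simp only [map_cons, sum_cons, length_cons, ih, Nat.succ_mul]; omega

-- ============ forward, once case ============
lemma fwd_once {N n s1 s2 k : ℕ} (hN : 1 ≤ N) (P : n.Partition)
    (h1 : Multiset.card P.parts = 3*N+1) (h2 : ∀ p, P.parts.count p ≤ 2)
    (h3 : altSumType 3 P 1 = s1) (h4 : altSumType 3 P 2 = s2)
    (hmin : (dl P).getD (3*N) 0 = k) (hb : ¬ (dl P).getD (3*N-1) 0 = k) :
    Multiset.card (mkD (((dl P).take (3*N)).map (· - k)) (n - (3*N+1)*k)).parts = 3*N ∧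
    (∀ p, (mkD (((dl P).take (3*N)).map (· - k)) (n - (3*N+1)*k)).parts.count p ≤ 2) ∧
    altSumType 3 (mkD (((dl P).take (3*N)).map (· - k)) (n - (3*N+1)*k)) 1 = s1 - k ∧
    altSumType 3 (mkD (((dl P).take (3*N)).map (· - k)) (n - (3*N+1)*k)) 2 = s2 ∧
    k ≤ s1 ∧ (3*N+1)*k ≤ n ∧
    ((((dl P).take (3*N)).map (· - k)).map (· + k)) ++ [k] = dl P ∧
    dl (mkD (((dl P).take (3*N)).map (· - k)) (n - (3*N+1)*k)) = ((dl P).take (3*N)).map (· - k) := by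
  have hs := dl_sorted P
  have hposL := dl_pos P
  have hsumL : (dl P).sum = n := dl_sum P
  have hlen : (dl P).length = 3*N+1 := by rw [dl_length P, h1]
  set L := dl P with hLdef
  have hanti3 : L.getD (3*N) 0 ≤ L.getD (3*N-1) 0 := getD_anti hs (by omega)
  have hgtk : k < L.getD (3*N-1) 0 := by omega
  have hgt : ∀ x ∈ L.take (3*N), k < x := by
    intro x hx
    obtain ⟨i, hilt, hxe⟩ := mem_iff_getElem.1 hx
    have hi : i < 3*N := by
      have := hilt; rw [length_take] at this; omega
    have hiL : i < L.length := by omega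
    have he : x = L.getD i 0 := by
      rw [getD_eq_getElem _ _ hiL, ← getElem_take (h := hilt), hxe]
    have := getD_anti hs (show i ≤ 3*N-1 by omega)
    omega
  set M := (L.take (3*N)).map (· - k) with hMdef
  have hlenM : M.length = 3*N := by
    rw [hMdef, length_map, length_take]; omega
  have hposM : ∀ x ∈ M, 0 < x := by
    intro x hx
    obtain ⟨y, hy, rfl⟩ := mem_map.1 hx
    have := hgt y hy; omega
  have hdrop : L.drop (3*N) = [k] := by rw [drop_eq_single (by omega), hmin]
  obtain ⟨c, hc⟩ : ∃ c, (3*N)*k = c := ⟨_, rfl⟩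
  have hmul : (3*N+1)*k = c + k := by rw [← hc]; ring
  have hsum_take : (L.take (3*N)).sum = M.sum + c := by
    have h5 := sum_map_sub (l := L.take (3*N)) (k := k) (fun x hx => le_of_lt (hgt x hx))
    rw [length_take] at h5
    rw [h5, ← hMdef]
    congr 1
    rw [← hc]
    congr 1
    omega
  have hsplit : (L.take (3*N)).sum + (L.drop (3*N)).sum = n := by
    rw [← sum_append, take_append_drop, hsumL]
  have hdropsum : (L.drop (3*N)).sum = k := by rw [hdrop]; simp
  have hkn : (3*N+1)*k ≤ n := by omega
  have hMsum : M.sum = n - (3*N+1)*k := by omega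
  have hsortM : M.Pairwise (· ≥ ·) := by
    rw [hMdef]
    refine pairwise_map.2 ?_
    exact (List.Pairwise.sublist (take_sublist _ _) hs).imp (fun hab => Nat.sub_le_sub_right hab k)
  have hQparts : (mkD M (n - (3*N+1)*k)).parts = (M : Multiset ℕ) := mkD_parts hposM hMsum
  have hdlQ : dl (mkD M (n - (3*N+1)*k)) = M := dl_mkD hposM hMsum hsortM
  -- alternating sums
  have e1 := alt_once_1 hs hlen hmin
  have e2 := alt_once_2 hs hlen hmin
  have eP1 : altSumType 3 P 1 = listAlt L 1 (N+1) := altSumType_eq P 1 (N+1) (by rw [← hLdef]; omega)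
  have eP2 : altSumType 3 P 2 = listAlt L 2 (N+1) := altSumType_eq P 2 (N+1) (by rw [← hLdef]; omega)
  have eQ1 : altSumType 3 (mkD M (n - (3*N+1)*k)) 1 = listAlt M 1 N := by
    rw [altSumType_eq _ 1 N (by rw [hdlQ]; omega), hdlQ]
  have eQ2 : altSumType 3 (mkD M (n - (3*N+1)*k)) 2 = listAlt M 2 N := by
    rw [altSumType_eq _ 2 N (by rw [hdlQ]; omega), hdlQ]
  have hs1 : s1 = listAlt M 1 N + k := by rw [← h3, eP1, e1, ← hMdef]
  have hs2 : s2 = listAlt M 2 N := by rw [← h4, eP2, e2, ← hMdef]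
  have hmapback : M.map (· + k) = L.take (3*N) := by
    rw [hMdef, map_map]
    have : ∀ x ∈ L.take (3*N), ((· + k) ∘ (· - k)) x = id x := by
      intro x hx
      have := hgt x hx
      simp only [Function.comp_apply, id_eq]
      omega
    rw [map_congr_left this, map_id]
  refine ⟨?_, ?_, ?_, ?_, by omega, hkn, ?_, hdlQ⟩
  · rw [hQparts, Multiset.coe_card, hlenM]
  · intro p
    rw [hQparts, Multiset.coe_count, hMdef, count_map_sub hgt]
    calc (L.take (3*N)).count (p+k) ≤ L.count (p+k) := (take_sublist _ _).count_le _
      _ = P.parts.count (p+k) := dl_count P _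
      _ ≤ 2 := h2 _
  · rw [eQ1]; omega
  · rw [eQ2]; omega
  · rw [hmapback, ← hdrop, take_append_drop]



-- ============ forward, twice case ============
lemma fwd_twice {N n s1 s2 k : ℕ} (P : n.Partition)
    (h1 : Multiset.card P.parts = 3*(N+1)+1) (h2 : ∀ p, P.parts.count p ≤ 2)
    (h3 : altSumType 3 P 1 = s1) (h4 : altSumType 3 P 2 = s2)
    (hmin : (dl P).getD (3*(N+1)) 0 = k) (hb : (dl P).getD (3*N+2) 0 = k) :
    Multiset.card (mkD (((dl P).take (3*N+2)).map (· - k)) (n - (3*(N+1)+1)*k)).parts = 3*N+2 ∧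
    (∀ p, (mkD (((dl P).take (3*N+2)).map (· - k)) (n - (3*(N+1)+1)*k)).parts.count p ≤ 2) ∧
    altSumType 3 (mkD (((dl P).take (3*N+2)).map (· - k)) (n - (3*(N+1)+1)*k)) 1 = s1 - k ∧
    altSumType 3 (mkD (((dl P).take (3*N+2)).map (· - k)) (n - (3*(N+1)+1)*k)) 2 = s2 ∧
    k ≤ s1 ∧ (3*(N+1)+1)*k ≤ n ∧
    ((((dl P).take (3*N+2)).map (· - k)).map (· + k)) ++ [k, k] = dl P ∧
    dl (mkD (((dl P).take (3*N+2)).map (· - k)) (n - (3*(N+1)+1)*k)) = ((dl P).take (3*N+2)).map (· - k) := by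
  have hs := dl_sorted P
  have hposL := dl_pos P
  have hsumL : (dl P).sum = n := dl_sum P
  have hlen : (dl P).length = 3*(N+1)+1 := by rw [dl_length P, h1]
  set L := dl P with hLdef
  have hanti3 : L.getD (3*(N+1)) 0 ≤ L.getD (3*N+2) 0 := getD_anti hs (by omega)
  have hanti4 : L.getD (3*N+2) 0 ≤ L.getD (3*N+1) 0 := getD_anti hs (by omega)
  have hgtk : k < L.getD (3*N+1) 0 := by
    rcases Nat.lt_or_ge k (L.getD (3*N+1) 0) with h | h
    · exact h
    · exfalso
      have he1 : L.getD (3*N+1) 0 = k := by omega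
      have hdrop3 : L.drop (3*N+1) = [k, k, k] := by
        rw [drop_eq_triple (by omega)]
        have e3 : 3*N+1+2 = 3*(N+1) := by omega
        have e4 : 3*N+1+1 = 3*N+2 := by omega
        rw [he1, e3, e4, hb, hmin]
      have hc3 : L.count k ≥ 3 := by
        have := (L.drop_sublist (3*N+1)).count_le k
        rw [hdrop3] at this
        simp at this
        omega
      have := h2 k
      rw [← dl_count P k, ← hLdef] at this
      omega
  have hgt : ∀ x ∈ L.take (3*N+2), k < x := by
    intro x hx
    obtain ⟨i, hilt, hxe⟩ := mem_iff_getElem.1 hx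
    have hi : i < 3*N+2 := by
      have := hilt; rw [length_take] at this; omega
    have hiL : i < L.length := by omega
    have he : x = L.getD i 0 := by
      rw [getD_eq_getElem _ _ hiL, ← getElem_take (h := hilt), hxe]
    have := getD_anti hs (show i ≤ 3*N+1 by omega)
    omega
  set M := (L.take (3*N+2)).map (· - k) with hMdef
  have hlenM : M.length = 3*N+2 := by
    rw [hMdef, length_map, length_take]; omega
  have hposM : ∀ x ∈ M, 0 < x := by
    intro x hx
    obtain ⟨y, hy, rfl⟩ := mem_map.1 hx
    have := hgt y hy; omega
  have hdrop : L.drop (3*N+2) = [k, k] := by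
    rw [drop_eq_pair (by omega)]
    have e3 : 3*N+2+1 = 3*(N+1) := by omega
    rw [e3, hb, hmin]
  obtain ⟨c, hc⟩ : ∃ c, (3*N+2)*k = c := ⟨_, rfl⟩
  have hmul : (3*(N+1)+1)*k = c + k + k := by rw [← hc]; ring
  have hsum_take : (L.take (3*N+2)).sum = M.sum + c := by
    have h5 := sum_map_sub (l := L.take (3*N+2)) (k := k) (fun x hx => le_of_lt (hgt x hx))
    rw [length_take] at h5
    rw [h5, ← hMdef]
    congr 1
    rw [← hc]
    congr 1
    omega
  have hsplit : (L.take (3*N+2)).sum + (L.drop (3*N+2)).sum = n := by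
    rw [← sum_append, take_append_drop, hsumL]
  have hdropsum : (L.drop (3*N+2)).sum = k + k := by rw [hdrop]; simp
  have hkn : (3*(N+1)+1)*k ≤ n := by omega
  have hMsum : M.sum = n - (3*(N+1)+1)*k := by omega
  have hsortM : M.Pairwise (· ≥ ·) := by
    rw [hMdef]
    refine pairwise_map.2 ?_
    exact (List.Pairwise.sublist (take_sublist _ _) hs).imp (fun hab => Nat.sub_le_sub_right hab k)
  have hQparts : (mkD M (n - (3*(N+1)+1)*k)).parts = (M : Multiset ℕ) := mkD_parts hposM hMsum
  have hdlQ : dl (mkD M (n - (3*(N+1)+1)*k)) = M := dl_mkD hposM hMsum hsortM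
  have e1 := alt_twice_1 hs hlen hmin
  have e2 := alt_twice_2 hs hlen hb
  have eP1 : altSumType 3 P 1 = listAlt L 1 (N+2) := altSumType_eq P 1 (N+2) (by rw [← hLdef]; omega)
  have eP2 : altSumType 3 P 2 = listAlt L 2 (N+2) := altSumType_eq P 2 (N+2) (by rw [← hLdef]; omega)
  have eQ1 : altSumType 3 (mkD M (n - (3*(N+1)+1)*k)) 1 = listAlt M 1 (N+1) := by
    rw [altSumType_eq _ 1 (N+1) (by rw [hdlQ]; omega), hdlQ]
  have eQ2 : altSumType 3 (mkD M (n - (3*(N+1)+1)*k)) 2 = listAlt M 2 (N+1) := by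
    rw [altSumType_eq _ 2 (N+1) (by rw [hdlQ]; omega), hdlQ]
  have hs1 : s1 = listAlt M 1 (N+1) + k := by rw [← h3, eP1, e1, ← hMdef]
  have hs2 : s2 = listAlt M 2 (N+1) := by rw [← h4, eP2, e2, ← hMdef]
  have hmapback : M.map (· + k) = L.take (3*N+2) := by
    rw [hMdef, map_map]
    have : ∀ x ∈ L.take (3*N+2), ((· + k) ∘ (· - k)) x = id x := by
      intro x hx
      have := hgt x hx
      simp only [Function.comp_apply, id_eq]
      omega
    rw [map_congr_left this, map_id]
  refine ⟨?_, ?_, ?_, ?_, by omega, hkn, ?_, hdlQ⟩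
  · rw [hQparts, Multiset.coe_card, hlenM]
  · intro p
    rw [hQparts, Multiset.coe_count, hMdef, count_map_sub hgt]
    calc (L.take (3*N+2)).count (p+k) ≤ L.count (p+k) := (take_sublist _ _).count_le _
      _ = P.parts.count (p+k) := dl_count P _
      _ ≤ 2 := h2 _
  · rw [eQ1]; omega
  · rw [eQ2]; omega
  · rw [hmapback, ← hdrop, take_append_drop]



-- ============ backward, once case ============
lemma bwd_once {N n s1 s2 k : ℕ} (hN : 1 ≤ N) (hk1 : 1 ≤ k) (hks : k ≤ s1)
    (Q : (n - (3*N+1)*k).Partition)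
    (g1 : Multiset.card Q.parts = 3*N) (g2 : ∀ p, Q.parts.count p ≤ 2)
    (g3 : altSumType 3 Q 1 = s1 - k) (g4 : altSumType 3 Q 2 = s2) :
    Multiset.card (mkD ((dl Q).map (· + k) ++ [k]) n).parts = 3*N+1 ∧
    (∀ p, (mkD ((dl Q).map (· + k) ++ [k]) n).parts.count p ≤ 2) ∧
    altSumType 3 (mkD ((dl Q).map (· + k) ++ [k]) n) 1 = s1 ∧
    altSumType 3 (mkD ((dl Q).map (· + k) ++ [k]) n) 2 = s2 ∧
    dl (mkD ((dl Q).map (· + k) ++ [k]) n) = (dl Q).map (· + k) ++ [k] ∧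
    ((dl Q).map (· + k) ++ [k]).getD (3*N) 0 = k ∧
    ¬ (((dl Q).map (· + k) ++ [k]).getD (3*N-1) 0 = k) ∧
    ((((dl Q).map (· + k) ++ [k]).take (3*N)).map (· - k)) = dl Q := by
  have hDsorted := dl_sorted Q
  have hDpos := dl_pos Q
  have hDsum : (dl Q).sum = n - (3*N+1)*k := dl_sum Q
  have hDlen : (dl Q).length = 3*N := by rw [dl_length Q, g1]
  set D := dl Q with hDdef
  obtain ⟨c, hc⟩ : ∃ c, (3*N)*k = c := ⟨_, rfl⟩
  have hmul : (3*N+1)*k = c + k := by rw [← hc]; ring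
  have h3N : 3*N ≤ n - (c+k) := by
    rw [← hmul, ← hDsum, ← hDlen]
    exact length_le_sum hDpos
  have hkn : c + k ≤ n := by omega
  have hDsum' : D.sum = n - (c+k) := by rw [hDsum, hmul]
  set L := D.map (· + k) ++ [k] with hLdef
  have hLlen : L.length = 3*N+1 := by
    rw [hLdef, length_append, length_map, hDlen]; rfl
  have hLsum : L.sum = n := by
    rw [hLdef, sum_append, sum_map_add, hDlen, hc, hDsum']
    simp
    omega
  have hLpos : ∀ x ∈ L, 0 < x := by
    intro x hx
    rw [hLdef, mem_append] at hx
    rcases hx with hx | hx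
    · obtain ⟨y, hy, rfl⟩ := mem_map.1 hx; omega
    · simp at hx; omega
  have hLsorted : L.Pairwise (· ≥ ·) := by
    rw [hLdef]
    refine pairwise_append.2 ⟨pairwise_map.2 (hDsorted.imp (fun hab => by omega)), ?_, ?_⟩
    · simp
    · intro x hx y hy
      simp at hy
      obtain ⟨d, hd, rfl⟩ := mem_map.1 hx
      omega
  have hdlP : dl (mkD L n) = L := dl_mkD hLpos hLsum hLsorted
  have hPparts : (mkD L n).parts = (L : Multiset ℕ) := mkD_parts hLpos hLsum
  have hgetD3N : L.getD (3*N) 0 = k := by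
    rw [hLdef, getD_append_right _ _ _ _ (by rw [length_map, hDlen])]
    rw [length_map, hDlen]
    simp
  have hgetD3N1 : L.getD (3*N-1) 0 = D.getD (3*N-1) 0 + k := by
    rw [hLdef, getD_append _ _ _ _ (by rw [length_map, hDlen]; omega)]
    exact getD_map_add (by omega)
  have hne : ¬ (L.getD (3*N-1) 0 = k) := by
    have hmem : D.getD (3*N-1) 0 ∈ D := getD_mem (by omega)
    have := hDpos _ hmem
    omega
  have htake : L.take (3*N) = D.map (· + k) := by
    rw [hLdef]
    exact take_left' (by rw [length_map, hDlen])
  have hshrink : ((L.take (3*N)).map (· - k)) = D := by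
    rw [htake, map_map]
    have : ∀ x ∈ D, ((· - k) ∘ (· + k)) x = id x := by
      intro x hx; simp
    rw [map_congr_left this, map_id]
  have e1 := alt_once_1 hLsorted hLlen hgetD3N
  have e2 := alt_once_2 hLsorted hLlen hgetD3N
  rw [hshrink] at e1 e2
  have eQ1 : altSumType 3 Q 1 = listAlt D 1 N := altSumType_eq Q 1 N (by rw [← hDdef]; omega)
  have eQ2 : altSumType 3 Q 2 = listAlt D 2 N := altSumType_eq Q 2 N (by rw [← hDdef]; omega)
  have eP1 : altSumType 3 (mkD L n) 1 = listAlt L 1 (N+1) := by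
    rw [altSumType_eq _ 1 (N+1) (by rw [hdlP]; omega), hdlP]
  have eP2 : altSumType 3 (mkD L n) 2 = listAlt L 2 (N+1) := by
    rw [altSumType_eq _ 2 (N+1) (by rw [hdlP]; omega), hdlP]
  refine ⟨?_, ?_, ?_, ?_, hdlP, hgetD3N, hne, hshrink⟩
  · rw [hPparts, Multiset.coe_card, hLlen]
  · intro p
    rw [hPparts, Multiset.coe_count, hLdef, count_append]
    by_cases hp : p = k
    · rw [hp]
      have h0 : (D.map (· + k)).count k = 0 := by
        rw [count_map_add]
        have h00 : D.count (k - k) = 0 := by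
          rw [count_eq_zero]
          intro hmem
          have := hDpos _ hmem
          omega
        simpa using h00
      rw [h0]
      simp
    · have h1 : ([k] : List ℕ).count p = 0 := by
        simp [count_singleton]
        omega
      rw [h1, count_map_add]
      by_cases hkp : k ≤ p
      · rw [if_pos hkp]
        have := g2 (p - k)
        rw [← dl_count Q, ← hDdef] at this
        omega
      · rw [if_neg hkp]; omega
  · rw [eP1, e1]
    rw [eQ1] at g3
    omega
  · rw [eP2, e2]
    rw [eQ2] at g4
    omega



-- ============ backward, twice case ============
lemma bwd_twice {N n s1 s2 k : ℕ} (hk1 : 1 ≤ k) (hks : k ≤ s1)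
    (Q : (n - (3*(N+1)+1)*k).Partition)
    (g1 : Multiset.card Q.parts = 3*N+2) (g2 : ∀ p, Q.parts.count p ≤ 2)
    (g3 : altSumType 3 Q 1 = s1 - k) (g4 : altSumType 3 Q 2 = s2) :
    Multiset.card (mkD ((dl Q).map (· + k) ++ [k, k]) n).parts = 3*(N+1)+1 ∧
    (∀ p, (mkD ((dl Q).map (· + k) ++ [k, k]) n).parts.count p ≤ 2) ∧
    altSumType 3 (mkD ((dl Q).map (· + k) ++ [k, k]) n) 1 = s1 ∧
    altSumType 3 (mkD ((dl Q).map (· + k) ++ [k, k]) n) 2 = s2 ∧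
    dl (mkD ((dl Q).map (· + k) ++ [k, k]) n) = (dl Q).map (· + k) ++ [k, k] ∧
    ((dl Q).map (· + k) ++ [k, k]).getD (3*(N+1)) 0 = k ∧
    ((dl Q).map (· + k) ++ [k, k]).getD (3*N+2) 0 = k ∧
    ((((dl Q).map (· + k) ++ [k, k]).take (3*N+2)).map (· - k)) = dl Q := by
  have hDsorted := dl_sorted Q
  have hDpos := dl_pos Q
  have hDsum : (dl Q).sum = n - (3*(N+1)+1)*k := dl_sum Q
  have hDlen : (dl Q).length = 3*N+2 := by rw [dl_length Q, g1]
  set D := dl Q with hDdef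
  obtain ⟨c, hc⟩ : ∃ c, (3*N+2)*k = c := ⟨_, rfl⟩
  have hmul : (3*(N+1)+1)*k = c + k + k := by rw [← hc]; ring
  have h3N : 3*N+2 ≤ n - (c+k+k) := by
    rw [← hmul, ← hDsum, ← hDlen]
    exact length_le_sum hDpos
  have hkn : c + k + k ≤ n := by omega
  have hDsum' : D.sum = n - (c+k+k) := by rw [hDsum, hmul]
  set L := D.map (· + k) ++ [k, k] with hLdef
  have hLlen : L.length = 3*(N+1)+1 := by
    rw [hLdef, length_append, length_map, hDlen]; rfl
  have hLsum : L.sum = n := by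
    rw [hLdef, sum_append, sum_map_add, hDlen, hc, hDsum']
    simp
    omega
  have hLpos : ∀ x ∈ L, 0 < x := by
    intro x hx
    rw [hLdef, mem_append] at hx
    rcases hx with hx | hx
    · obtain ⟨y, hy, rfl⟩ := mem_map.1 hx; omega
    · simp at hx; omega
  have hLsorted : L.Pairwise (· ≥ ·) := by
    rw [hLdef]
    refine pairwise_append.2 ⟨pairwise_map.2 (hDsorted.imp (fun hab => by omega)), ?_, ?_⟩
    · simp
    · intro x hx y hy
      simp at hy
      obtain ⟨d, hd, rfl⟩ := mem_map.1 hx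
      rcases hy with rfl | rfl <;> omega
  have hdlP : dl (mkD L n) = L := dl_mkD hLpos hLsum hLsorted
  have hPparts : (mkD L n).parts = (L : Multiset ℕ) := mkD_parts hLpos hLsum
  have hgetD3N : L.getD (3*(N+1)) 0 = k := by
    rw [hLdef, getD_append_right _ _ _ _ (by rw [length_map, hDlen]; omega)]
    rw [length_map, hDlen]
    have e : 3*(N+1) - (3*N+2) = 1 := by omega
    rw [e]
    rfl
  have hgetD3N2 : L.getD (3*N+2) 0 = k := by
    rw [hLdef, getD_append_right _ _ _ _ (by rw [length_map, hDlen])]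
    rw [length_map, hDlen]
    simp
  have htake : L.take (3*N+2) = D.map (· + k) := by
    rw [hLdef]
    exact take_left' (by rw [length_map, hDlen])
  have hshrink : ((L.take (3*N+2)).map (· - k)) = D := by
    rw [htake, map_map]
    have : ∀ x ∈ D, ((· - k) ∘ (· + k)) x = id x := by
      intro x hx; simp
    rw [map_congr_left this, map_id]
  have e1 := alt_twice_1 hLsorted hLlen hgetD3N
  have e2 := alt_twice_2 hLsorted hLlen hgetD3N2
  rw [hshrink] at e1 e2
  have eQ1 : altSumType 3 Q 1 = listAlt D 1 (N+1) := altSumType_eq Q 1 (N+1) (by rw [← hDdef]; omega)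
  have eQ2 : altSumType 3 Q 2 = listAlt D 2 (N+1) := altSumType_eq Q 2 (N+1) (by rw [← hDdef]; omega)
  have eP1 : altSumType 3 (mkD L n) 1 = listAlt L 1 (N+2) := by
    rw [altSumType_eq _ 1 (N+2) (by rw [hdlP]; omega), hdlP]
  have eP2 : altSumType 3 (mkD L n) 2 = listAlt L 2 (N+2) := by
    rw [altSumType_eq _ 2 (N+2) (by rw [hdlP]; omega), hdlP]
  refine ⟨?_, ?_, ?_, ?_, hdlP, hgetD3N, hgetD3N2, hshrink⟩
  · rw [hPparts, Multiset.coe_card, hLlen]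
  · intro p
    rw [hPparts, Multiset.coe_count, hLdef, count_append]
    by_cases hp : p = k
    · rw [hp]
      have h0 : (D.map (· + k)).count k = 0 := by
        rw [count_map_add]
        have h00 : D.count (k - k) = 0 := by
          rw [count_eq_zero]
          intro hmem
          have := hDpos _ hmem
          omega
        simpa using h00
      rw [h0]
      simp
    · have h1 : ([k, k] : List ℕ).count p = 0 := by
        simp [count_cons]
        omega
      rw [h1, count_map_add]
      by_cases hkp : k ≤ p
      · rw [if_pos hkp]
        have := g2 (p - k)
        rw [← dl_count Q, ← hDdef] at this
        omega
      · rw [if_neg hkp]; omega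
  · rw [eP1, e1]
    rw [eQ1] at g3
    omega
  · rw [eP2, e2]
    rw [eQ2] at g4
    omega




lemma mkD_dl {m : ℕ} (P : m.Partition) : mkD (dl P) m = P :=
  partition_ext (by rw [mkD_parts (dl_pos P) (dl_sum P), dl_coe])

lemma mem_le_sum {l : List ℕ} {x : ℕ} (h : x ∈ l) : x ≤ l.sum := by
  induction l with
  | nil => simp at h
  | cons a t ih =>
    rcases mem_cons.1 h with rfl | h
    · simp
    · have := ih h
      simp only [sum_cons]
      omega

-- normalized-index wrappers
lemma fwd_twice' {N n s1 s2 k : ℕ} (hN : 1 ≤ N) (P : n.Partition)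
    (h1 : Multiset.card P.parts = 3*N+1) (h2 : ∀ p, P.parts.count p ≤ 2)
    (h3 : altSumType 3 P 1 = s1) (h4 : altSumType 3 P 2 = s2)
    (hmin : (dl P).getD (3*N) 0 = k) (hb : (dl P).getD (3*N-1) 0 = k) :
    Multiset.card (mkD (((dl P).take (3*N-1)).map (· - k)) (n - (3*N+1)*k)).parts = 3*N-1 ∧
    (∀ p, (mkD (((dl P).take (3*N-1)).map (· - k)) (n - (3*N+1)*k)).parts.count p ≤ 2) ∧
    altSumType 3 (mkD (((dl P).take (3*N-1)).map (· - k)) (n - (3*N+1)*k)) 1 = s1 - k ∧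
    altSumType 3 (mkD (((dl P).take (3*N-1)).map (· - k)) (n - (3*N+1)*k)) 2 = s2 ∧
    k ≤ s1 ∧ (3*N+1)*k ≤ n ∧
    ((((dl P).take (3*N-1)).map (· - k)).map (· + k)) ++ [k, k] = dl P ∧
    dl (mkD (((dl P).take (3*N-1)).map (· - k)) (n - (3*N+1)*k)) = ((dl P).take (3*N-1)).map (· - k) := by
  obtain ⟨N', rfl⟩ : ∃ N', N = N'+1 := ⟨N-1, by omega⟩
  have e : 3*(N'+1)-1 = 3*N'+2 := by omega
  rw [e] at hb ⊢
  have e2 : 3*(N'+1) = 3*N'+2+1 := by omega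
  rw [e2]
  rw [e2] at hmin h1
  have e3 : 3*N'+2+1 = 3*(N'+1) := by omega
  rw [e3] at hmin h1
  exact fwd_twice P h1 h2 h3 h4 hmin hb

lemma bwd_twice' {N n s1 s2 k : ℕ} (hN : 1 ≤ N) (hk1 : 1 ≤ k) (hks : k ≤ s1)
    (Q : (n - (3*N+1)*k).Partition)
    (g1 : Multiset.card Q.parts = 3*N-1) (g2 : ∀ p, Q.parts.count p ≤ 2)
    (g3 : altSumType 3 Q 1 = s1 - k) (g4 : altSumType 3 Q 2 = s2) :
    Multiset.card (mkD ((dl Q).map (· + k) ++ [k, k]) n).parts = 3*N+1 ∧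
    (∀ p, (mkD ((dl Q).map (· + k) ++ [k, k]) n).parts.count p ≤ 2) ∧
    altSumType 3 (mkD ((dl Q).map (· + k) ++ [k, k]) n) 1 = s1 ∧
    altSumType 3 (mkD ((dl Q).map (· + k) ++ [k, k]) n) 2 = s2 ∧
    dl (mkD ((dl Q).map (· + k) ++ [k, k]) n) = (dl Q).map (· + k) ++ [k, k] ∧
    ((dl Q).map (· + k) ++ [k, k]).getD (3*N) 0 = k ∧
    ((dl Q).map (· + k) ++ [k, k]).getD (3*N-1) 0 = k ∧
    ((((dl Q).map (· + k) ++ [k, k]).take (3*N-1)).map (· - k)) = dl Q := by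
  obtain ⟨N', rfl⟩ : ∃ N', N = N'+1 := ⟨N-1, by omega⟩
  have e : 3*(N'+1)-1 = 3*N'+2 := by omega
  rw [e] at g1 ⊢
  exact bwd_twice hk1 hks Q g1 g2 g3 g4





def DomT (N n s1 s2 k : ℕ) :=
  {P : {P : n.Partition // P.parts.card = 3*N+1 ∧ (∀ p, P.parts.count p ≤ 2) ∧
    altSumType 3 P 1 = s1 ∧ altSumType 3 P 2 = s2} // (dl P.1).getD (3*N) 0 = k}

def AT (m s1' s2 n' : ℕ) :=
  {P : n'.Partition // P.parts.card = m ∧ (∀ p, P.parts.count p ≤ 2) ∧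
    altSumType 3 P 1 = s1' ∧ altSumType 3 P 2 = s2}

noncomputable def keyFwd (N n s1 s2 k : ℕ) (hN : 1 ≤ N) :
    DomT N n s1 s2 k → AT (3*N) (s1-k) s2 (n - (3*N+1)*k) ⊕ AT (3*N-1) (s1-k) s2 (n - (3*N+1)*k) :=
  fun x =>
    if hb : (dl x.1.1).getD (3*N-1) 0 = k then
      Sum.inr ⟨mkD (((dl x.1.1).take (3*N-1)).map (· - k)) (n - (3*N+1)*k), by
        obtain ⟨h1, h2, h3, h4⟩ := x.1.2
        obtain ⟨p1, p2, p3, p4, _⟩ := fwd_twice' hN x.1.1 h1 h2 h3 h4 x.2 hb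
        exact ⟨p1, p2, p3, p4⟩⟩
    else
      Sum.inl ⟨mkD (((dl x.1.1).take (3*N)).map (· - k)) (n - (3*N+1)*k), by
        obtain ⟨h1, h2, h3, h4⟩ := x.1.2
        obtain ⟨p1, p2, p3, p4, _⟩ := fwd_once hN x.1.1 h1 h2 h3 h4 x.2 hb
        exact ⟨p1, p2, p3, p4⟩⟩

noncomputable def keyBwd (N n s1 s2 k : ℕ) (hN : 1 ≤ N) (hk1 : 1 ≤ k) (hks : k ≤ s1) :
    AT (3*N) (s1-k) s2 (n - (3*N+1)*k) ⊕ AT (3*N-1) (s1-k) s2 (n - (3*N+1)*k) → DomT N n s1 s2 k :=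
  fun y =>
    Sum.elim
      (fun Q => ⟨⟨mkD ((dl Q.1).map (· + k) ++ [k]) n, by
          obtain ⟨g1, g2, g3, g4⟩ := Q.2
          obtain ⟨p1, p2, p3, p4, _⟩ := bwd_once hN hk1 hks Q.1 g1 g2 g3 g4
          exact ⟨p1, p2, p3, p4⟩⟩, by
        obtain ⟨g1, g2, g3, g4⟩ := Q.2
        obtain ⟨_, _, _, _, hdl, hg, _⟩ := bwd_once hN hk1 hks Q.1 g1 g2 g3 g4
        simpa [hdl] using hg⟩)
      (fun Q => ⟨⟨mkD ((dl Q.1).map (· + k) ++ [k, k]) n, by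
          obtain ⟨g1, g2, g3, g4⟩ := Q.2
          obtain ⟨p1, p2, p3, p4, _⟩ := bwd_twice' hN hk1 hks Q.1 g1 g2 g3 g4
          exact ⟨p1, p2, p3, p4⟩⟩, by
        obtain ⟨g1, g2, g3, g4⟩ := Q.2
        obtain ⟨_, _, _, _, hdl, hg, _⟩ := bwd_twice' hN hk1 hks Q.1 g1 g2 g3 g4
        simpa [hdl] using hg⟩)
      y





lemma key_left (N n s1 s2 k : ℕ) (hN : 1 ≤ N) (hk1 : 1 ≤ k) (hks : k ≤ s1) (x : DomT N n s1 s2 k) :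
    keyBwd N n s1 s2 k hN hk1 hks (keyFwd N n s1 s2 k hN x) = x := by
  obtain ⟨⟨P, hP⟩, hmin⟩ := x
  obtain ⟨h1, h2, h3, h4⟩ := hP
  apply Subtype.ext
  apply Subtype.ext
  simp only [keyFwd]
  by_cases hb : (dl P).getD (3*N-1) 0 = k
  · rw [dif_pos hb]
    simp only [keyBwd, Sum.elim_inr]
    obtain ⟨_, _, _, _, _, _, hround, hdlQ⟩ := fwd_twice' hN P h1 h2 h3 h4 hmin hb
    show mkD _ n = P
    rw [hdlQ, hround]
    exact mkD_dl P
  · rw [dif_neg hb]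
    simp only [keyBwd, Sum.elim_inl]
    obtain ⟨_, _, _, _, _, _, hround, hdlQ⟩ := fwd_once hN P h1 h2 h3 h4 hmin hb
    show mkD _ n = P
    rw [hdlQ, hround]
    exact mkD_dl P

lemma key_right (N n s1 s2 k : ℕ) (hN : 1 ≤ N) (hk1 : 1 ≤ k) (hks : k ≤ s1)
    (y : AT (3*N) (s1-k) s2 (n - (3*N+1)*k) ⊕ AT (3*N-1) (s1-k) s2 (n - (3*N+1)*k)) :
    keyFwd N n s1 s2 k hN (keyBwd N n s1 s2 k hN hk1 hks y) = y := by
  rcases y with ⟨Q, hQ⟩ | ⟨Q, hQ⟩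
  · obtain ⟨g1, g2, g3, g4⟩ := hQ
    obtain ⟨_, _, _, _, hdl, hg, hne, hshrink⟩ := bwd_once hN hk1 hks Q g1 g2 g3 g4
    simp only [keyBwd, Sum.elim_inl, keyFwd]
    dsimp only [Sum.elim]
    refine (dif_neg (by rw [hdl]; exact hne)).trans ?_
    have hQeq : mkD (((dl (mkD ((dl Q).map (· + k) ++ [k]) n)).take (3*N)).map (· - k))
        (n - (3*N+1)*k) = Q := by
      rw [hdl, hshrink]
      exact mkD_dl Q
    exact congrArg Sum.inl (Subtype.ext hQeq)
  · obtain ⟨g1, g2, g3, g4⟩ := hQ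
    obtain ⟨_, _, _, _, hdl, hg, hg2, hshrink⟩ := bwd_twice' hN hk1 hks Q g1 g2 g3 g4
    simp only [keyBwd, Sum.elim_inr, keyFwd]
    dsimp only [Sum.elim]
    refine (dif_pos (by rw [hdl]; exact hg2)).trans ?_
    have hQeq : mkD (((dl (mkD ((dl Q).map (· + k) ++ [k, k]) n)).take (3*N-1)).map (· - k))
        (n - (3*N+1)*k) = Q := by
      rw [hdl, hshrink]
      exact mkD_dl Q
    exact congrArg Sum.inr (Subtype.ext hQeq)

lemma key (N n s1 s2 k : ℕ) (hN : 1 ≤ N) (hk1 : 1 ≤ k) (hks : k ≤ s1) :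
    Nat.card (DomT N n s1 s2 k) =
      aN (3*N) (s1-k) s2 (n - (3*N+1)*k) + aN (3*N-1) (s1-k) s2 (n - (3*N+1)*k) := by
  have e1 : aN (3*N) (s1-k) s2 (n - (3*N+1)*k) = Nat.card (AT (3*N) (s1-k) s2 (n - (3*N+1)*k)) := rfl
  have e2 : aN (3*N-1) (s1-k) s2 (n - (3*N+1)*k) = Nat.card (AT (3*N-1) (s1-k) s2 (n - (3*N+1)*k)) := rfl
  rw [e1, e2]
  have hfin1 : Finite (AT (3*N) (s1-k) s2 (n - (3*N+1)*k)) := by unfold AT; infer_instance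
  have hfin2 : Finite (AT (3*N-1) (s1-k) s2 (n - (3*N+1)*k)) := by unfold AT; infer_instance
  rw [← Nat.card_sum]
  exact Nat.card_congr ⟨keyFwd N n s1 s2 k hN, keyBwd N n s1 s2 k hN hk1 hks,
    key_left N n s1 s2 k hN hk1 hks, key_right N n s1 s2 k hN hk1 hks⟩

lemma card_fiberwise {α : Type*} [Finite α] (F : Finset ℕ) (g : α → ℕ) (hg : ∀ a, g a ∈ F) :
    Nat.card α = ∑ k ∈ F, Nat.card {a : α // g a = k} := by
  classical
  have := Fintype.ofFinite α
  rw [Nat.card_eq_fintype_card, ← Finset.card_univ,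
      Finset.card_eq_sum_card_fiberwise (f := g) (t := F) (fun a _ => hg a)]
  refine Finset.sum_congr rfl (fun k hk => ?_)
  rw [Nat.card_eq_fintype_card, Fintype.card_subtype]




end S10

theorem stmt10 (N : ℕ) (hN : 1 ≤ N) (s1 s2 n : ℕ) (hn : 1 ≤ n) :
    aN (3 * N + 1) s1 s2 n =
      ∑ k ∈ (Finset.Icc 1 n).filter (fun k => k ≤ s1),
        (aN (3 * N) (s1 - k) s2 (n - (3 * N + 1) * k) +
          aN (3 * N - 1) (s1 - k) s2 (n - (3 * N + 1) * k)) := by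
  classical
  open S10 in
  have hmain : aN (3*N+1) s1 s2 n =
      Nat.card {P : n.Partition // P.parts.card = 3*N+1 ∧ (∀ p, P.parts.count p ≤ 2) ∧
        altSumType 3 P 1 = s1 ∧ altSumType 3 P 2 = s2} := rfl
  rw [hmain]
  rw [S10.card_fiberwise ((Finset.Icc 1 n).filter (fun k => k ≤ s1))
    (fun P => (S10.dl P.1).getD (3*N) 0) ?memb]
  case memb =>
    rintro ⟨P, h1, h2, h3, h4⟩
    simp only [Finset.mem_filter, Finset.mem_Icc]
    have hlen : (S10.dl P).length = 3*N+1 := by rw [S10.dl_length P, h1]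
    have hmem : (S10.dl P).getD (3*N) 0 ∈ S10.dl P := S10.getD_mem (by omega)
    have hpos := S10.dl_pos P _ hmem
    have hle : (S10.dl P).getD (3*N) 0 ≤ n := by
      have := S10.mem_le_sum hmem
      rwa [S10.dl_sum P] at this
    refine ⟨⟨hpos, hle⟩, ?_⟩
    -- k ≤ s1
    have heq : altSumType 3 P 1 = S10.listAlt (S10.dl P) 1 (N+1) :=
      S10.altSumType_eq P 1 (N+1) (by omega)
    have hterm : (S10.dl P).getD (N*3 + (1-1)) 0 - (S10.dl P).getD (N*3 + 1) 0
        = (S10.dl P).getD (3*N) 0 := by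
      rw [getD_eq_default _ _ (n := N*3+1) (by omega)]
      have h0 : N*3 + (1-1) = 3*N := by omega
      rw [h0]
      omega
    have hle2 : (S10.dl P).getD (3*N) 0 ≤ S10.listAlt (S10.dl P) 1 (N+1) := by
      rw [← hterm]
      exact Finset.single_le_sum (f := fun i => (S10.dl P).getD (i*3 + (1-1)) 0 - (S10.dl P).getD (i*3+1) 0)
        (fun i _ => Nat.zero_le _) (Finset.self_mem_range_succ N)
    rw [← heq] at hle2
    omega
  refine Finset.sum_congr rfl (fun k hk => ?_)
  simp only [Finset.mem_filter, Finset.mem_Icc] at hk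
  exact S10.key N n s1 s2 k hN hk.1.1 hk.2
end

section
/- For every integer N ≥ 1, the following identities hold in the formal power series ring ℤ[[x, y, q]]: (i) A_{3N} · (1 − q^{3N}) = (A_{3N−1} + A_{3N−2}) · q^{3N}; (ii) A_{3N+1} · (1 − x q^{3N+1}) = (A_{3N} + A_{3N−1}) · x q^{3N+1}; (iii) A_{3N+2} · (1 − y q^{3N+2}) = (A_{3N+1} + A_{3N}) · y q^{3N+2}. -/
/-- The formal power series `A_N ∈ ℤ[[x, y, q]]` (variables `x = X 0`, `y = X 1`,
`q = X 2`): `A_0 = 1` and, for `N ≥ 1`,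
`A_N = ∑_{Σ₁, Σ₂ ≥ 0, n ≥ 1} a_N(Σ₁, Σ₂; n) x^{Σ₁} y^{Σ₂} q^n`. -/
noncomputable def Aser (N : ℕ) : MvPowerSeries (Fin 3) ℤ :=
  if N = 0 then 1
  else fun e => if 1 ≤ e 2 then (aN N (e 0) (e 1) (e 2) : ℤ) else 0

/-- The variable `x`. -/
noncomputable def Xv : MvPowerSeries (Fin 3) ℤ := MvPowerSeries.X 0

/-- The variable `y`. -/
noncomputable def Yv : MvPowerSeries (Fin 3) ℤ := MvPowerSeries.X 1

/-- The variable `q`. -/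
noncomputable def Qv : MvPowerSeries (Fin 3) ℤ := MvPowerSeries.X 2

/-! ### List lemmas -/

open Multiset Finset

/-- The weakly decreasing sorted list of a multiset of naturals. -/
def sortD (s : Multiset ℕ) : List ℕ := (s.sort (· ≤ ·)).reverse

lemma nthPart_eq {n : ℕ} (P : n.Partition) (i : ℕ) :
    nthPart P i = (sortD P.parts).getD i 0 := rfl

lemma sortD_coe (s : Multiset ℕ) : (sortD s : Multiset ℕ) = s := by
  rw [sortD, Multiset.coe_reverse, Multiset.sort_eq]

lemma sortD_length (s : Multiset ℕ) : (sortD s).length = s.card := by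
  rw [sortD, List.length_reverse, Multiset.length_sort]

lemma sortD_sorted (s : Multiset ℕ) : List.Pairwise (· ≥ ·) (sortD s) := by
  rw [sortD, List.pairwise_reverse]
  exact (Multiset.pairwise_sort s (· ≤ ·)).imp (fun h => h)

instance : IsAntisymm ℕ (· ≥ ·) := ⟨fun _ _ h1 h2 => le_antisymm h2 h1⟩

lemma sortD_eq_of {l : List ℕ} {s : Multiset ℕ} (hp : (l : Multiset ℕ) = s)
    (hs : List.Pairwise (· ≥ ·) l) : sortD s = l := by
  refine List.Perm.eq_of_pairwise' (sortD_sorted s) hs ?_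
  rw [← Multiset.coe_eq_coe, sortD_coe, hp]

lemma getD_zero_of_le {l : List ℕ} {i : ℕ} (h : l.length ≤ i) : l.getD i 0 = 0 := by
  simp [List.getD_eq_getElem?_getD, List.getElem?_eq_none h]

lemma getD_zero_of_forall {l : List ℕ} (h : ∀ x ∈ l, x = 0) (i : ℕ) : l.getD i 0 = 0 := by
  rw [List.getD_eq_getElem?_getD]
  cases h' : l[i]? with
  | none => rfl
  | some v => exact h v (by
      have := List.getElem?_eq_some_iff.1 h'
      rcases this with ⟨hlt, hv⟩
      exact hv ▸ List.getElem_mem hlt)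

lemma sorted_getD_le {l : List ℕ} (hl : List.Pairwise (· ≥ ·) l) {i j : ℕ} (hij : i ≤ j) :
    l.getD j 0 ≤ l.getD i 0 := by
  by_cases hj : j < l.length
  · have hi : i < l.length := lt_of_le_of_lt hij hj
    rw [List.getD_eq_getElem _ _ hj, List.getD_eq_getElem _ _ hi]
    rcases eq_or_lt_of_le hij with rfl | h
    · exact le_refl _
    · exact hl.rel_get_of_lt (a := ⟨i, hi⟩) (b := ⟨j, hj⟩) h
  · rw [getD_zero_of_le (le_of_not_gt hj)]
    exact Nat.zero_le _

lemma filter_ne_zero_getD {l : List ℕ} (hl : List.Pairwise (· ≥ ·) l) (i : ℕ) :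
    (l.filter (· ≠ 0)).getD i 0 = l.getD i 0 := by
  induction l generalizing i with
  | nil => simp
  | cons a t ih =>
    by_cases ha : a = 0
    · subst ha
      have hall : ∀ x ∈ (0 : ℕ) :: t, x = 0 := by
        intro x hx
        rcases List.mem_cons.1 hx with rfl | hx
        · rfl
        · exact Nat.le_zero.1 (List.rel_of_pairwise_cons hl hx)
      rw [getD_zero_of_forall hall, getD_zero_of_forall
        (fun x hx => hall x (List.mem_of_mem_filter hx))]
    · rw [List.filter_cons_of_pos (by simpa using ha)]
      cases i with
      | zero => rfl
      | succ i => simpa using ih hl.of_cons i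

lemma getD_map_sub (l : List ℕ) (i : ℕ) : (l.map (· - 1)).getD i 0 = l.getD i 0 - 1 := by
  rw [List.getD_eq_getElem?_getD, List.getD_eq_getElem?_getD, List.getElem?_map]
  cases l[i]? <;> rfl

/-! ### shrink and grow on multisets -/

/-- Subtract one from each part and drop the zeros. -/
def shrinkM (s : Multiset ℕ) : Multiset ℕ := (s.map (· - 1)).filter (· ≠ 0)

/-- Add one to each part and append `r` ones. -/
def growM (s : Multiset ℕ) (r : ℕ) : Multiset ℕ := s.map (· + 1) + Multiset.replicate r 1

lemma sortD_shrinkM (s : Multiset ℕ) :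
    sortD (shrinkM s) = ((sortD s).map (· - 1)).filter (· ≠ 0) := by
  refine sortD_eq_of ?_ ?_
  · rw [shrinkM]
    conv_rhs => rw [← sortD_coe s]
    simp [Multiset.filter_coe, Multiset.map_coe]
  · refine List.Pairwise.sublist List.filter_sublist ?_
    rw [List.pairwise_map]
    exact (sortD_sorted s).imp (fun h => Nat.sub_le_sub_right h 1)

lemma getD_sortD_shrinkM (s : Multiset ℕ) (i : ℕ) :
    (sortD (shrinkM s)).getD i 0 = (sortD s).getD i 0 - 1 := by
  rw [sortD_shrinkM, filter_ne_zero_getD, getD_map_sub]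
  rw [List.pairwise_map]
  exact (sortD_sorted s).imp (fun h => Nat.sub_le_sub_right h 1)

lemma nthPart_shrink {n m : ℕ} (P : n.Partition) (Q : m.Partition)
    (hpq : Q.parts = shrinkM P.parts) (i : ℕ) : nthPart Q i = nthPart P i - 1 := by
  rw [nthPart_eq, nthPart_eq, hpq, getD_sortD_shrinkM]

lemma nthPart_eq_zero_iff {n : ℕ} (P : n.Partition) (i : ℕ) :
    nthPart P i = 0 ↔ P.parts.card ≤ i := by
  constructor
  · intro h
    by_contra hc
    push_neg at hc
    have hi : i < (sortD P.parts).length := by rwa [sortD_length]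
    rw [nthPart_eq, List.getD_eq_getElem _ _ hi] at h
    have hmem : (sortD P.parts)[i] ∈ P.parts := by
      have h1 : (sortD P.parts)[i] ∈ sortD P.parts := List.getElem_mem hi
      have h2 := Multiset.mem_coe.2 h1
      rwa [sortD_coe] at h2
    exact absurd (P.parts_pos hmem) (by omega)
  · intro h
    rw [nthPart_eq]
    exact getD_zero_of_le (by rwa [sortD_length])

lemma nthPart_anti {n : ℕ} (P : n.Partition) {i j : ℕ} (hij : i ≤ j) :
    nthPart P j ≤ nthPart P i :=
  sorted_getD_le (sortD_sorted _) hij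

lemma card_le_n {n : ℕ} (P : n.Partition) : P.parts.card ≤ n := by
  have h := Multiset.card_nsmul_le_sum (s := P.parts) (a := 1)
    (fun x hx => P.parts_pos hx)
  rw [P.parts_sum] at h
  simpa using h

/-! ### Arithmetic of shrinkM / growM -/

lemma sum_map_sub_one (s : Multiset ℕ) (hs : ∀ x ∈ s, 0 < x) :
    (s.map (· - 1)).sum = s.sum - s.card := by
  induction s using Multiset.induction with
  | empty => simp
  | cons a t ih =>
    have ha : 0 < a := hs a (mem_cons_self a t)
    have ht : ∀ x ∈ t, 0 < x := fun x hx => hs x (mem_cons_of_mem hx)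
    have hct : t.card ≤ t.sum := by
      have h := Multiset.card_nsmul_le_sum (s := t) (a := 1) (fun x hx => ht x hx)
      simpa using h
    simp only [Multiset.map_cons, Multiset.sum_cons, Multiset.card_cons, ih ht]
    omega

lemma sum_shrinkM (s : Multiset ℕ) (hs : ∀ x ∈ s, 0 < x) :
    (shrinkM s).sum = s.sum - s.card := by
  have h := Multiset.filter_add_not (fun x => x ≠ 0) (s.map (· - 1))
  have h2 : (Multiset.filter (fun a => ¬ a ≠ 0) (s.map (· - 1))).sum = 0 := by
    refine Multiset.sum_eq_zero ?_
    intro x hx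
    have := Multiset.of_mem_filter hx
    omega
  have h3 := congrArg Multiset.sum h
  rw [Multiset.sum_add, h2, add_zero] at h3
  rw [shrinkM, h3, sum_map_sub_one s hs]

lemma parts_decomp (s : Multiset ℕ) (hs : ∀ x ∈ s, 0 < x) :
    s = s.filter (2 ≤ ·) + Multiset.replicate (s.count 1) 1 := by
  conv_lhs => rw [← Multiset.filter_add_not (2 ≤ ·) s]
  congr 1
  rw [Multiset.filter_congr (q := fun x => x = 1)
    (fun x hx => by have := hs x hx; constructor <;> intro <;> omega)]
  exact Multiset.filter_eq' s 1

lemma shrinkM_eq (s : Multiset ℕ) :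
    shrinkM s = (s.filter (2 ≤ ·)).map (· - 1) := by
  rw [shrinkM, Multiset.filter_map]
  congr 1
  refine Multiset.filter_congr (fun x _ => ?_)
  simp only [Function.comp_apply]
  constructor <;> intro <;> omega

lemma card_shrinkM (s : Multiset ℕ) (hs : ∀ x ∈ s, 0 < x) :
    (shrinkM s).card = s.card - s.count 1 := by
  rw [shrinkM_eq, Multiset.card_map]
  have h := congrArg Multiset.card (parts_decomp s hs)
  rw [Multiset.card_add, Multiset.card_replicate] at h
  omega

lemma count_shrinkM (s : Multiset ℕ) (p : ℕ) (hp : 1 ≤ p) :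
    (shrinkM s).count p = s.count (p + 1) := by
  rw [shrinkM_eq, Multiset.count_map]
  have h1 : Multiset.filter (fun a => p = a - 1) (Multiset.filter (fun a => 2 ≤ a) s)
      = Multiset.filter (fun a => a = p + 1) s := by
    rw [Multiset.filter_filter]
    exact Multiset.filter_congr (fun x _ => by constructor <;> intro <;> omega)
  rw [h1, Multiset.filter_eq', Multiset.card_replicate]

lemma growM_sum (s : Multiset ℕ) (r : ℕ) : (growM s r).sum = s.sum + s.card + r := by
  rw [growM, Multiset.sum_add, Multiset.sum_replicate]
  have h : (s.map (· + 1)).sum = (s.map id).sum + (s.map (fun _ => 1)).sum :=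
    Multiset.sum_map_add
  rw [Multiset.map_id] at h
  simp only [Multiset.map_const', Multiset.sum_replicate, smul_eq_mul, mul_one] at h ⊢
  omega

lemma growM_pos (s : Multiset ℕ) (r : ℕ) : ∀ x ∈ growM s r, 0 < x := by
  intro x hx
  rw [growM, Multiset.mem_add] at hx
  rcases hx with hx | hx
  · rcases Multiset.mem_map.1 hx with ⟨a, _, rfl⟩
    omega
  · rw [Multiset.eq_of_mem_replicate hx]
    omega

lemma growM_card (s : Multiset ℕ) (r : ℕ) : (growM s r).card = s.card + r := by
  rw [growM, Multiset.card_add, Multiset.card_map, Multiset.card_replicate]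

lemma shrinkM_growM (s : Multiset ℕ) (hs : ∀ x ∈ s, 0 < x) (r : ℕ) :
    shrinkM (growM s r) = s := by
  rw [growM, shrinkM, Multiset.map_add, Multiset.map_map, Multiset.map_replicate]
  have h1 : s.map ((· - 1) ∘ (· + 1)) = s := by
    rw [show ((· - 1) ∘ (· + 1) : ℕ → ℕ) = id from funext (fun a => by simp),
      Multiset.map_id]
  rw [h1, Multiset.filter_add]
  have h2 : Multiset.filter (· ≠ 0) s = s :=
    Multiset.filter_eq_self.2 (fun x hx => by have := hs x hx; omega)
  have h3 : Multiset.filter (· ≠ 0) (Multiset.replicate r (1 - 1 : ℕ)) = 0 := by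
    refine Multiset.filter_eq_nil.2 ?_
    intro x hx
    rw [Multiset.eq_of_mem_replicate hx]
    simp
  rw [h2, h3, add_zero]

lemma growM_shrinkM (s : Multiset ℕ) (hs : ∀ x ∈ s, 0 < x) :
    growM (shrinkM s) (s.count 1) = s := by
  rw [growM, shrinkM_eq, Multiset.map_map]
  have h1 : (s.filter (2 ≤ ·)).map ((· + 1) ∘ (· - 1)) = s.filter (2 ≤ ·) := by
    conv_rhs => rw [← Multiset.map_id (s.filter (2 ≤ ·))]
    refine Multiset.map_congr rfl ?_
    intro x hx
    have := Multiset.of_mem_filter hx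
    simp only [Function.comp_apply, id_eq]
    omega
  rw [h1, ← parts_decomp s hs]

lemma count_one_growM (s : Multiset ℕ) (hs : ∀ x ∈ s, 0 < x) (r : ℕ) :
    (growM s r).count 1 = r := by
  rw [growM, Multiset.count_add, Multiset.count_replicate, if_pos rfl,
    Multiset.count_map]
  have h : Multiset.filter (fun a => 1 = a + 1) s = 0 :=
    Multiset.filter_eq_nil.2 (fun x hx => by have := hs x hx; omega)
  rw [h]
  simp

lemma count_succ_growM (s : Multiset ℕ) (r p : ℕ) (hp : 1 ≤ p) :
    (growM s r).count (p + 1) = s.count p := by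
  rw [growM, Multiset.count_add, Multiset.count_replicate,
    if_neg (by omega), add_zero]
  exact Multiset.count_map_eq_count' _ s (fun a b => by omega) p

/-! ### Alternating sum type lemmas -/

lemma nthPart_term_zero {n : ℕ} (P : n.Partition) {j i : ℕ} (h : P.parts.card ≤ i) :
    nthPart P (i * 3 + (j - 1)) - nthPart P (i * 3 + j) = 0 := by
  have h1 : nthPart P (i * 3 + (j - 1)) = 0 :=
    (nthPart_eq_zero_iff P _).2 (by omega)
  have h2 : nthPart P (i * 3 + j) = 0 :=
    (nthPart_eq_zero_iff P _).2 (by omega)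
  omega

lemma altSumType_eq_range {n : ℕ} (P : n.Partition) (j B : ℕ) (hB : P.parts.card ≤ B) :
    altSumType 3 P j
      = ∑ i ∈ Finset.range B, (nthPart P (i * 3 + (j - 1)) - nthPart P (i * 3 + j)) := by
  have hcn : P.parts.card ≤ n := card_le_n P
  rw [altSumType]
  have hA : ∑ i ∈ Finset.range (n + 1),
        (nthPart P (i * 3 + (j - 1)) - nthPart P (i * 3 + j))
      = ∑ i ∈ Finset.range (max (n + 1) B),
        (nthPart P (i * 3 + (j - 1)) - nthPart P (i * 3 + j)) := by
    refine Finset.sum_subset (Finset.range_subset_range.2 (le_max_left _ _)) ?_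
    intro i hi hni
    have h1 := Finset.mem_range.1 hi
    have h2 : ¬ i < n + 1 := fun h => hni (Finset.mem_range.2 h)
    exact nthPart_term_zero P (by omega)
  have hB2 : ∑ i ∈ Finset.range B,
        (nthPart P (i * 3 + (j - 1)) - nthPart P (i * 3 + j))
      = ∑ i ∈ Finset.range (max (n + 1) B),
        (nthPart P (i * 3 + (j - 1)) - nthPart P (i * 3 + j)) := by
    refine Finset.sum_subset (Finset.range_subset_range.2 (le_max_right _ _)) ?_
    intro i hi hni
    have h2 : ¬ i < B := fun h => hni (Finset.mem_range.2 h)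
    exact nthPart_term_zero P (by omega)
  exact hA.trans hB2.symm

lemma altSum_shrink {n m : ℕ} (P : n.Partition) (Q : m.Partition)
    (hpq : Q.parts = shrinkM P.parts) {j : ℕ} (hj1 : 1 ≤ j) (hj2 : j < 3) :
    altSumType 3 P j = altSumType 3 Q j + (if P.parts.card % 3 = j then 1 else 0) := by
  set K := P.parts.card with hK
  have hKn : K ≤ n := card_le_n P
  have hQc : Q.parts.card ≤ K := by
    rw [hpq, shrinkM]
    exact le_trans (Multiset.card_le_card (Multiset.filter_le _ _))
      (le_of_eq (Multiset.card_map _ _))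
  rw [altSumType, altSumType_eq_range Q j (n + 1) (by omega)]
  have key : ∀ i ∈ Finset.range (n + 1),
      nthPart P (i * 3 + (j - 1)) - nthPart P (i * 3 + j)
        = (nthPart Q (i * 3 + (j - 1)) - nthPart Q (i * 3 + j))
          + (if K = 3 * i + j then 1 else 0) := by
    intro i _
    have ha := nthPart_anti P (show i * 3 + (j - 1) ≤ i * 3 + j by omega)
    have e1 := nthPart_eq_zero_iff P (i * 3 + (j - 1))
    have e2 := nthPart_eq_zero_iff P (i * 3 + j)
    rw [nthPart_shrink P Q hpq, nthPart_shrink P Q hpq]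
    rw [← hK] at e1 e2
    split_ifs with h <;> omega
  rw [Finset.sum_congr rfl key, Finset.sum_add_distrib]
  congr 1
  by_cases hKj : K % 3 = j
  · have h0 : ∀ i ∈ Finset.range (n + 1),
        (if K = 3 * i + j then 1 else 0) = if i = K / 3 then (1 : ℕ) else 0 := by
      intro i _
      by_cases h : i = K / 3
      · subst h; rw [if_pos (by omega), if_pos rfl]
      · rw [if_neg (by omega), if_neg h]
    rw [Finset.sum_congr rfl h0, Finset.sum_ite_eq' (Finset.range (n + 1)) (K / 3)
      (fun _ => (1 : ℕ)), if_pos (Finset.mem_range.2 (by omega)), if_pos hKj]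
  · rw [if_neg hKj]
    exact Finset.sum_eq_zero (fun i _ => by rw [if_neg (by omega)])

lemma altSum_ge_one {n : ℕ} (P : n.Partition) {j : ℕ} (hj1 : 1 ≤ j) (hj2 : j < 3)
    (hK : P.parts.card % 3 = j) : 1 ≤ altSumType 3 P j := by
  set K := P.parts.card with hKdef
  have hK1 : 1 ≤ K := by omega
  have hKn : K ≤ n := card_le_n P
  set i0 := K / 3 with hi0
  have hKe : K = 3 * i0 + j := by omega
  have e1 := nthPart_eq_zero_iff P (i0 * 3 + (j - 1))
  have e2 := nthPart_eq_zero_iff P (i0 * 3 + j)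
  rw [← hKdef] at e1 e2
  have hterm : 1 ≤ nthPart P (i0 * 3 + (j - 1)) - nthPart P (i0 * 3 + j) := by omega
  refine le_trans hterm ?_
  rw [altSumType]
  exact Finset.single_le_sum (f := fun i =>
    nthPart P (i * 3 + (j - 1)) - nthPart P (i * 3 + j))
    (fun i _ => Nat.zero_le _) (Finset.mem_range.2 (by omega))

/-! ### The conditions and the bijection -/

def Pcond (K s1 s2 : ℕ) {n : ℕ} (P : n.Partition) : Prop :=
  P.parts.card = K ∧ (∀ p, P.parts.count p ≤ 2) ∧
    altSumType 3 P 1 = s1 ∧ altSumType 3 P 2 = s2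

def Qcond (K s1 s2 : ℕ) {m : ℕ} (Q : m.Partition) : Prop :=
  (Q.parts.card = K ∨ Q.parts.card = K - 1 ∨ Q.parts.card = K - 2) ∧
    (∀ p, Q.parts.count p ≤ 2) ∧ altSumType 3 Q 1 = s1 ∧ altSumType 3 Q 2 = s2

lemma aN_eq (K s1 s2 n : ℕ) :
    aN K s1 s2 n = Nat.card {P : n.Partition // Pcond K s1 s2 P} := rfl

lemma aN_zero_of_lt (K s1 s2 n : ℕ) (h : n < K) : aN K s1 s2 n = 0 := by
  rw [aN_eq]
  have : IsEmpty {P : n.Partition // Pcond K s1 s2 P} := by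
    refine ⟨fun ⟨P, hP⟩ => ?_⟩
    have := card_le_n P
    rw [hP.1] at this
    omega
  exact Nat.card_of_isEmpty

lemma aN_zero_s1 (K s2 n : ℕ) (hK : K % 3 = 1) : aN K 0 s2 n = 0 := by
  rw [aN_eq]
  have : IsEmpty {P : n.Partition // Pcond K 0 s2 P} := by
    refine ⟨fun ⟨P, hP⟩ => ?_⟩
    have h1 := altSum_ge_one P (j := 1) le_rfl (by omega) (by rw [hP.1]; exact hK)
    rw [hP.2.2.1] at h1
    omega
  exact Nat.card_of_isEmpty

lemma aN_zero_s2 (K s1 n : ℕ) (hK : K % 3 = 2) : aN K s1 0 n = 0 := by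
  rw [aN_eq]
  have : IsEmpty {P : n.Partition // Pcond K s1 0 P} := by
    refine ⟨fun ⟨P, hP⟩ => ?_⟩
    have h1 := altSum_ge_one P (j := 2) (by omega) (by omega) (by rw [hP.1]; exact hK)
    rw [hP.2.2.2] at h1
    omega
  exact Nat.card_of_isEmpty

noncomputable def mainEquiv (K s1 s2 n d1 d2 : ℕ)
    (hd1 : d1 = if K % 3 = 1 then 1 else 0) (hd2 : d2 = if K % 3 = 2 then 1 else 0)
    (hK : 3 ≤ K) (hn : K ≤ n) (hs1 : d1 ≤ s1) (hs2 : d2 ≤ s2) :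
    {P : n.Partition // Pcond K s1 s2 P}
      ≃ {Q : (n - K).Partition // Qcond K (s1 - d1) (s2 - d2) Q} where
  toFun := fun ⟨P, hP⟩ => by
    have hpos : ∀ x ∈ shrinkM P.parts, 0 < x := fun x hx => by
      have := Multiset.of_mem_filter hx
      omega
    have hsum : (shrinkM P.parts).sum = n - K := by
      rw [sum_shrinkM _ (fun x hx => P.parts_pos hx), P.parts_sum, hP.1]
    refine ⟨⟨shrinkM P.parts, fun {i} hi => hpos i hi, hsum⟩, ?_, ?_, ?_, ?_⟩
    · show (shrinkM P.parts).card = K ∨ (shrinkM P.parts).card = K - 1 ∨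
        (shrinkM P.parts).card = K - 2
      have hcs := card_shrinkM P.parts (fun x hx => P.parts_pos hx)
      have hc1 := hP.2.1 1
      rw [hP.1] at hcs
      omega
    · intro p
      show (shrinkM P.parts).count p ≤ 2
      cases p with
      | zero =>
        rw [Multiset.count_eq_zero_of_notMem (fun hmem => by
          have := hpos 0 hmem; omega)]
        omega
      | succ p =>
        rw [count_shrinkM P.parts (p + 1) (by omega)]
        exact hP.2.1 (p + 2)
    · have h := altSum_shrink P
        (⟨shrinkM P.parts, fun {i} hi => hpos i hi, hsum⟩ : (n - K).Partition)
        rfl (j := 1) le_rfl (by omega)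
      rw [hP.2.2.1, hP.1, ← hd1] at h
      omega
    · have h := altSum_shrink P
        (⟨shrinkM P.parts, fun {i} hi => hpos i hi, hsum⟩ : (n - K).Partition)
        rfl (j := 2) (by omega) (by omega)
      rw [hP.2.2.2, hP.1, ← hd2] at h
      omega
  invFun := fun ⟨Q, hQ⟩ => by
    have hQc : Q.parts.card ≤ K := by rcases hQ.1 with h | h | h <;> omega
    have hQpos : ∀ x ∈ Q.parts, 0 < x := fun x hx => Q.parts_pos hx
    have hsum : (growM Q.parts (K - Q.parts.card)).sum = n := by
      rw [growM_sum, Q.parts_sum]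
      omega
    have hcard : (growM Q.parts (K - Q.parts.card)).card = K := by
      rw [growM_card]
      omega
    have hpq : Q.parts = shrinkM (growM Q.parts (K - Q.parts.card)) :=
      (shrinkM_growM Q.parts hQpos _).symm
    refine ⟨⟨growM Q.parts (K - Q.parts.card),
      fun {i} hi => growM_pos _ _ i hi, hsum⟩, hcard, ?_, ?_, ?_⟩
    · intro p
      show (growM Q.parts (K - Q.parts.card)).count p ≤ 2
      match p with
      | 0 =>
        rw [Multiset.count_eq_zero_of_notMem (fun hmem => by
          have := growM_pos Q.parts (K - Q.parts.card) 0 hmem; omega)]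
        omega
      | 1 =>
        rw [count_one_growM Q.parts hQpos]
        rcases hQ.1 with h | h | h <;> omega
      | (p + 2) =>
        rw [show p + 2 = (p + 1) + 1 from rfl,
          count_succ_growM Q.parts _ (p + 1) (by omega)]
        exact hQ.2.1 (p + 1)
    · have h := altSum_shrink
        (⟨growM Q.parts (K - Q.parts.card),
          fun {i} hi => growM_pos _ _ i hi, hsum⟩ : n.Partition)
        Q hpq (j := 1) le_rfl (by omega)
      show altSumType 3 (⟨growM Q.parts (K - Q.parts.card),
          fun {i} hi => growM_pos _ _ i hi, hsum⟩ : n.Partition) 1 = s1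
      have hc2 : (⟨growM Q.parts (K - Q.parts.card),
          fun {i} hi => growM_pos _ _ i hi, hsum⟩ : n.Partition).parts.card = K := hcard
      rw [hc2, ← hd1, hQ.2.2.1] at h
      omega
    · have h := altSum_shrink
        (⟨growM Q.parts (K - Q.parts.card),
          fun {i} hi => growM_pos _ _ i hi, hsum⟩ : n.Partition)
        Q hpq (j := 2) (by omega) (by omega)
      show altSumType 3 (⟨growM Q.parts (K - Q.parts.card),
          fun {i} hi => growM_pos _ _ i hi, hsum⟩ : n.Partition) 2 = s2
      have hc2 : (⟨growM Q.parts (K - Q.parts.card),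
          fun {i} hi => growM_pos _ _ i hi, hsum⟩ : n.Partition).parts.card = K := hcard
      rw [hc2, ← hd2, hQ.2.2.2] at h
      omega
  left_inv := fun ⟨P, hP⟩ => by
    refine Subtype.ext (Nat.Partition.ext ?_)
    show growM (shrinkM P.parts) _ = P.parts
    have hcs := card_shrinkM P.parts (fun x hx => P.parts_pos hx)
    have hcount : P.parts.count 1 ≤ P.parts.card := Multiset.count_le_card 1 P.parts
    rw [hP.1] at hcs
    rw [show K - (shrinkM P.parts).card = P.parts.count 1 by rw [hcs]; rw [hP.1] at hcount; omega]
    exact growM_shrinkM P.parts (fun x hx => P.parts_pos hx)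
  right_inv := fun ⟨Q, hQ⟩ => by
    refine Subtype.ext (Nat.Partition.ext ?_)
    exact shrinkM_growM Q.parts (fun x hx => Q.parts_pos hx) _

lemma card_or3 {α : Type*} [Finite α] (p q r R : α → Prop)
    (hpq : ∀ x, p x → q x → False) (hpr : ∀ x, p x → r x → False)
    (hqr : ∀ x, q x → r x → False) :
    Nat.card {x // (p x ∨ q x ∨ r x) ∧ R x}
      = Nat.card {x // p x ∧ R x} + Nat.card {x // q x ∧ R x}
        + Nat.card {x // r x ∧ R x} := by
  classical
  have e1 : {x // (p x ∨ q x ∨ r x) ∧ R x}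
      ≃ {x // (p x ∧ R x) ∨ ((q x ∧ R x) ∨ (r x ∧ R x))} :=
    Equiv.subtypeEquivRight (fun x => by tauto)
  have e2 := subtypeOrEquiv (fun x => p x ∧ R x) (fun x => (q x ∧ R x) ∨ (r x ∧ R x))
    (by
      rw [Pi.disjoint_iff]
      intro x
      rw [Prop.disjoint_iff]
      rintro ⟨⟨hp, _⟩, (⟨hq, _⟩ | ⟨hr, _⟩)⟩
      · exact hpq x hp hq
      · exact hpr x hp hr)
  have e3 := subtypeOrEquiv (fun x => q x ∧ R x) (fun x => r x ∧ R x)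
    (by
      rw [Pi.disjoint_iff]
      intro x
      rw [Prop.disjoint_iff]
      rintro ⟨⟨hq, _⟩, ⟨hr, _⟩⟩
      exact hqr x hq hr)
  have h1 : Nat.card {x // (p x ∨ q x ∨ r x) ∧ R x}
      = Nat.card {x // p x ∧ R x} + Nat.card {x // (q x ∧ R x) ∨ (r x ∧ R x)} := by
    rw [Nat.card_congr (e1.trans e2), Nat.card_sum]
  have h2 : Nat.card {x // (q x ∧ R x) ∨ (r x ∧ R x)}
      = Nat.card {x // q x ∧ R x} + Nat.card {x // r x ∧ R x} := by
    rw [Nat.card_congr e3, Nat.card_sum]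
  omega

lemma aN_rec (K s1 s2 n d1 d2 : ℕ)
    (hd1 : d1 = if K % 3 = 1 then 1 else 0) (hd2 : d2 = if K % 3 = 2 then 1 else 0)
    (hK : 3 ≤ K) (hn : K ≤ n) (hs1 : d1 ≤ s1) (hs2 : d2 ≤ s2) :
    aN K s1 s2 n = aN K (s1 - d1) (s2 - d2) (n - K)
      + aN (K - 1) (s1 - d1) (s2 - d2) (n - K)
      + aN (K - 2) (s1 - d1) (s2 - d2) (n - K) := by
  rw [aN_eq, Nat.card_congr (mainEquiv K s1 s2 n d1 d2 hd1 hd2 hK hn hs1 hs2)]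
  rw [aN_eq, aN_eq, aN_eq]
  unfold Qcond Pcond
  exact card_or3 (α := (n - K).Partition) (fun Q => Q.parts.card = K) (fun Q => Q.parts.card = K - 1)
    (fun Q => Q.parts.card = K - 2)
    (fun Q => (∀ p, Q.parts.count p ≤ 2) ∧ altSumType 3 Q 1 = s1 - d1 ∧
      altSumType 3 Q 2 = s2 - d2)
    (fun Q (h1 : Q.parts.card = K) (h2 : Q.parts.card = K - 1) => by omega)
    (fun Q (h1 : Q.parts.card = K) (h2 : Q.parts.card = K - 2) => by omega)
    (fun Q (h1 : Q.parts.card = K - 1) (h2 : Q.parts.card = K - 2) => by omega)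

/-! ### Power series manipulation -/

lemma coeff_Aser (K : ℕ) (hK : K ≠ 0) (e : Fin 3 →₀ ℕ) :
    MvPowerSeries.coeff e (Aser K)
      = if 1 ≤ e 2 then (aN K (e 0) (e 1) (e 2) : ℤ) else 0 := by
  rw [MvPowerSeries.coeff_apply, show Aser K = (fun e : Fin 3 →₀ ℕ =>
    if 1 ≤ e 2 then (aN K (e 0) (e 1) (e 2) : ℤ) else 0) from if_neg hK]

lemma key_arith (K d1 d2 : ℕ)
    (hd1 : d1 = if K % 3 = 1 then 1 else 0) (hd2 : d2 = if K % 3 = 2 then 1 else 0)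
    (hK : 3 ≤ K) (s1 s2 nn : ℕ) :
    (if 1 ≤ nn then (aN K s1 s2 nn : ℤ) else 0)
      = if d1 ≤ s1 ∧ d2 ≤ s2 ∧ K ≤ nn then
          ((if 1 ≤ nn - K then (aN K (s1 - d1) (s2 - d2) (nn - K) : ℤ) else 0)
            + (if 1 ≤ nn - K then (aN (K - 1) (s1 - d1) (s2 - d2) (nn - K) : ℤ) else 0)
            + (if 1 ≤ nn - K then (aN (K - 2) (s1 - d1) (s2 - d2) (nn - K) : ℤ) else 0))
        else 0 := by
  by_cases hc : d1 ≤ s1 ∧ d2 ≤ s2 ∧ K ≤ nn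
  · rw [if_pos hc]
    have hrec := aN_rec K s1 s2 nn d1 d2 hd1 hd2 hK hc.2.2 hc.1 hc.2.1
    have hnn : 1 ≤ nn := by omega
    rw [if_pos hnn]
    by_cases h2 : 1 ≤ nn - K
    · rw [if_pos h2, if_pos h2, if_pos h2, hrec]
      push_cast
      ring
    · have hz : nn - K = 0 := by omega
      rw [if_neg h2, if_neg h2, if_neg h2, hrec, hz]
      rw [aN_zero_of_lt _ _ _ _ (by omega), aN_zero_of_lt _ _ _ _ (by omega),
        aN_zero_of_lt _ _ _ _ (by omega)]
      norm_num
  · rw [if_neg hc]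
    by_cases hnn : 1 ≤ nn
    · rw [if_pos hnn]
      by_cases hKnn : K ≤ nn
      · by_cases hc1 : d1 ≤ s1
        · have hs2' : ¬ d2 ≤ s2 := fun h => hc ⟨hc1, h, hKnn⟩
          have hm : K % 3 = 2 := by
            by_contra hm
            rw [hd2, if_neg hm] at hs2'
            omega
          have hs20 : s2 = 0 := by
            rw [hd2, if_pos hm] at hs2'
            omega
          rw [hs20, aN_zero_s2 _ _ _ hm]
          norm_num
        · have hm : K % 3 = 1 := by
            by_contra hm
            rw [hd1, if_neg hm] at hc1
            omega
          have hs10 : s1 = 0 := by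
            rw [hd1, if_pos hm] at hc1
            omega
          rw [hs10, aN_zero_s1 _ _ _ hm]
          norm_num
      · rw [aN_zero_of_lt _ _ _ _ (by omega)]
        norm_num
    · rw [if_neg hnn]


lemma coeff_u_apply (a : Fin 3) (k : ℕ) (b : Fin 3) :
    (Finsupp.single a k : Fin 3 →₀ ℕ) b = if a = b then k else 0 := Finsupp.single_apply

lemma le_of_forall3 {u e : Fin 3 →₀ ℕ} (h0 : u 0 ≤ e 0) (h1 : u 1 ≤ e 1)
    (h2 : u 2 ≤ e 2) : u ≤ e := by
  rw [Finsupp.le_def]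
  intro i
  rcases i with ⟨i, hi⟩
  interval_cases i
  · exact h0
  · exact h1
  · exact h2

theorem stmt12 (N : ℕ) (hN : 1 ≤ N) :
    Aser (3 * N) * (1 - Qv ^ (3 * N)) = (Aser (3 * N - 1) + Aser (3 * N - 2)) * Qv ^ (3 * N) ∧
    Aser (3 * N + 1) * (1 - Xv * Qv ^ (3 * N + 1)) =
      (Aser (3 * N) + Aser (3 * N - 1)) * (Xv * Qv ^ (3 * N + 1)) ∧
    Aser (3 * N + 2) * (1 - Yv * Qv ^ (3 * N + 2)) =
      (Aser (3 * N + 1) + Aser (3 * N)) * (Yv * Qv ^ (3 * N + 2)) := by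
  refine ⟨?_, ?_, ?_⟩
  · -- part (i)
    have h1 : Aser (3 * N)
        = (Aser (3 * N) + Aser (3 * N - 1) + Aser (3 * N - 2)) * Qv ^ (3 * N) := by
      rw [Qv, MvPowerSeries.X_pow_eq]
      apply MvPowerSeries.ext
      intro e
      rw [MvPowerSeries.coeff_mul_monomial, mul_one, _root_.map_add, _root_.map_add]
      rw [coeff_Aser _ (by omega), coeff_Aser _ (by omega), coeff_Aser _ (by omega),
        coeff_Aser _ (by omega)]
      have h0 : (e - Finsupp.single (2 : Fin 3) (3 * N)) 0 = e 0 := by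
        rw [Finsupp.tsub_apply, coeff_u_apply, if_neg (by decide), Nat.sub_zero]
      have h1e : (e - Finsupp.single (2 : Fin 3) (3 * N)) 1 = e 1 := by
        rw [Finsupp.tsub_apply, coeff_u_apply, if_neg (by decide), Nat.sub_zero]
      have h2e : (e - Finsupp.single (2 : Fin 3) (3 * N)) 2 = e 2 - 3 * N := by
        rw [Finsupp.tsub_apply, coeff_u_apply, if_pos rfl]
      rw [h0, h1e, h2e]
      have key := key_arith (3 * N) 0 0 (by rw [if_neg (by omega)])
        (by rw [if_neg (by omega)]) (by omega) (e 0) (e 1) (e 2)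
      simp only [Nat.sub_zero] at key
      rw [key]
      refine if_congr ?_ rfl rfl
      rw [Finsupp.single_le_iff]
      exact ⟨fun h => h.2.2, fun h => ⟨Nat.zero_le _, Nat.zero_le _, h⟩⟩
    linear_combination h1
  · -- part (ii)
    have hM : Xv * Qv ^ (3 * N + 1) = MvPowerSeries.monomial
        (Finsupp.single (0 : Fin 3) 1 + Finsupp.single (2 : Fin 3) (3 * N + 1)) 1 := by
      rw [Xv, Qv, ← pow_one (MvPowerSeries.X (0 : Fin 3)), MvPowerSeries.X_pow_eq,
        MvPowerSeries.X_pow_eq, MvPowerSeries.monomial_mul_monomial, one_mul]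
    have h1 : Aser (3 * N + 1)
        = (Aser (3 * N + 1) + Aser (3 * N) + Aser (3 * N - 1)) * (Xv * Qv ^ (3 * N + 1)) := by
      rw [hM]
      apply MvPowerSeries.ext
      intro e
      rw [MvPowerSeries.coeff_mul_monomial, mul_one, _root_.map_add, _root_.map_add]
      rw [coeff_Aser _ (by omega), coeff_Aser _ (by omega), coeff_Aser _ (by omega),
        coeff_Aser _ (by omega)]
      set u : Fin 3 →₀ ℕ :=
        Finsupp.single (0 : Fin 3) 1 + Finsupp.single (2 : Fin 3) (3 * N + 1) with hu
      have hu0 : u 0 = 1 := by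
        rw [hu, Finsupp.add_apply, coeff_u_apply, coeff_u_apply, if_pos rfl,
          if_neg (by decide)]
      have hu1 : u 1 = 0 := by
        rw [hu, Finsupp.add_apply, coeff_u_apply, coeff_u_apply, if_neg (by decide),
          if_neg (by decide)]
      have hu2 : u 2 = 3 * N + 1 := by
        rw [hu, Finsupp.add_apply, coeff_u_apply, coeff_u_apply, if_neg (by decide),
          if_pos rfl]
        omega
      have h0 : (e - u) 0 = e 0 - 1 := by rw [Finsupp.tsub_apply, hu0]
      have h1e : (e - u) 1 = e 1 := by rw [Finsupp.tsub_apply, hu1, Nat.sub_zero]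
      have h2e : (e - u) 2 = e 2 - (3 * N + 1) := by rw [Finsupp.tsub_apply, hu2]
      rw [h0, h1e, h2e]
      have key := key_arith (3 * N + 1) 1 0 (by rw [if_pos (by omega)])
        (by rw [if_neg (by omega)]) (by omega) (e 0) (e 1) (e 2)
      simp only [Nat.sub_zero] at key
      rw [show 3 * N + 1 - 1 = 3 * N by omega, show 3 * N + 1 - 2 = 3 * N - 1 by omega]
        at key
      rw [key]
      refine if_congr ?_ rfl rfl
      constructor
      · rintro ⟨ha, _, hb⟩
        exact le_of_forall3 (by rw [hu0]; exact ha) (by rw [hu1]; exact Nat.zero_le _)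
          (by rw [hu2]; exact hb)
      · intro h
        exact ⟨by have := h 0; rwa [hu0] at this, Nat.zero_le _,
          by have := h 2; rwa [hu2] at this⟩
    rw [hM] at h1 ⊢
    linear_combination h1
  · -- part (iii)
    have hM : Yv * Qv ^ (3 * N + 2) = MvPowerSeries.monomial
        (Finsupp.single (1 : Fin 3) 1 + Finsupp.single (2 : Fin 3) (3 * N + 2)) 1 := by
      rw [Yv, Qv, ← pow_one (MvPowerSeries.X (1 : Fin 3)), MvPowerSeries.X_pow_eq,
        MvPowerSeries.X_pow_eq, MvPowerSeries.monomial_mul_monomial, one_mul]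
    have h1 : Aser (3 * N + 2)
        = (Aser (3 * N + 2) + Aser (3 * N + 1) + Aser (3 * N)) * (Yv * Qv ^ (3 * N + 2)) := by
      rw [hM]
      apply MvPowerSeries.ext
      intro e
      rw [MvPowerSeries.coeff_mul_monomial, mul_one, _root_.map_add, _root_.map_add]
      rw [coeff_Aser _ (by omega), coeff_Aser _ (by omega), coeff_Aser _ (by omega),
        coeff_Aser _ (by omega)]
      set u : Fin 3 →₀ ℕ :=
        Finsupp.single (1 : Fin 3) 1 + Finsupp.single (2 : Fin 3) (3 * N + 2) with hu
      have hu0 : u 0 = 0 := by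
        rw [hu, Finsupp.add_apply, coeff_u_apply, coeff_u_apply, if_neg (by decide),
          if_neg (by decide)]
      have hu1 : u 1 = 1 := by
        rw [hu, Finsupp.add_apply, coeff_u_apply, coeff_u_apply, if_pos rfl,
          if_neg (by decide)]
      have hu2 : u 2 = 3 * N + 2 := by
        rw [hu, Finsupp.add_apply, coeff_u_apply, coeff_u_apply, if_neg (by decide),
          if_pos rfl]
        omega
      have h0 : (e - u) 0 = e 0 := by rw [Finsupp.tsub_apply, hu0, Nat.sub_zero]
      have h1e : (e - u) 1 = e 1 - 1 := by rw [Finsupp.tsub_apply, hu1]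
      have h2e : (e - u) 2 = e 2 - (3 * N + 2) := by rw [Finsupp.tsub_apply, hu2]
      rw [h0, h1e, h2e]
      have key := key_arith (3 * N + 2) 0 1 (by rw [if_neg (by omega)])
        (by rw [if_pos (by omega)]) (by omega) (e 0) (e 1) (e 2)
      simp only [Nat.sub_zero] at key
      rw [show 3 * N + 2 - 1 = 3 * N + 1 by omega, show 3 * N + 2 - 2 = 3 * N by omega]
        at key
      rw [key]
      refine if_congr ?_ rfl rfl
      constructor
      · rintro ⟨_, ha, hb⟩
        exact le_of_forall3 (by rw [hu0]; exact Nat.zero_le _) (by rw [hu1]; exact ha)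
          (by rw [hu2]; exact hb)
      · intro h
        exact ⟨Nat.zero_le _, by have := h 1; rwa [hu1] at this,
          by have := h 2; rwa [hu2] at this⟩
    rw [hM] at h1 ⊢
    linear_combination h1
end
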